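/- arXiv:0906.4875 — 4 statements merged into one kernel-verified Lean document; each statement's English description precedes it below -/
import Mathlib

section
/- Let X be a finite set with |X| ≥ 4 and let S be a collection of subsets of X. If S is phylogenetically decisive for X, then S satisfies the four-way partition property for X. -/
/-- A binary phylogenetic `X`-tree: a finite tree (connected acyclic simple graph)
whose degree-1 vertices (leaves) are in bijection with the label set `X`, and all of
whose non-leaf vertices have degree 3. -/
structure PhyloTree {α : Type} (X : Finset α) : Type 1 where
  V : Type
  fintypeV : Fintype V
  G : SimpleGraph V
  connected : G.Connected
  acyclic : G.IsAcyclic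
  leaf : α → V
  leaf_inj : ∀ x ∈ X, ∀ y ∈ X, leaf x = leaf y → x = y
  leaf_degree : ∀ x ∈ X, (G.neighborSet (leaf x)).ncard = 1
  degree_one_is_leaf : ∀ v : V, (G.neighborSet v).ncard = 1 → ∃ x ∈ X, leaf x = v
  internal_degree : ∀ v : V, (∀ x ∈ X, leaf x ≠ v) → (G.neighborSet v).ncard = 3

namespace PhyloTree

variable {α : Type} {X : Finset α}

/-- `T` resolves the quartet `{a,b,c,d}` as `ab|cd`: the (unique) path from the leaf
labeled `a` to the leaf labeled `b` is vertex-disjoint from the path from the leaf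
labeled `c` to the leaf labeled `d`. -/
def ResolvesAs (T : PhyloTree X) (a b c d : α) : Prop :=
  ∃ (p : T.G.Walk (T.leaf a) (T.leaf b)) (q : T.G.Walk (T.leaf c) (T.leaf d)),
    p.IsPath ∧ q.IsPath ∧ ∀ v ∈ p.support, v ∉ q.support

/-- Two binary phylogenetic `X`-trees are label-isomorphic. -/
def LabelIso (T T' : PhyloTree X) : Prop :=
  ∃ φ : T.G ≃g T'.G, ∀ x ∈ X, φ (T.leaf x) = T'.leaf x

/-- `T` and `T'` resolve the 4-element subset `q` identically. -/
def ResolveIdentically [DecidableEq α] (T T' : PhyloTree X) (q : Finset α) : Prop :=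
  ∀ a b c d : α, ({a, b, c, d} : Finset α) = q →
    (T.ResolvesAs a b c d ↔ T'.ResolvesAs a b c d)

/-- A cherry: a pair of leaves adjacent to the same vertex. -/
def IsCherry (T : PhyloTree X) (a b : α) : Prop :=
  ∃ v : T.V, T.G.Adj (T.leaf a) v ∧ T.G.Adj (T.leaf b) v

end PhyloTree

/-- `Q_S`: the set of all 4-element subsets contained in at least one member of `S`. -/
def QSet {α : Type} (S : Set (Finset α)) : Set (Finset α) :=
  {q | q.card = 4 ∧ ∃ Y ∈ S, q ⊆ Y}

/-- `S` is phylogenetically decisive for `X`: any two binary phylogenetic `X`-trees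
that resolve every quartet in `Q_S` identically are label-isomorphic. -/
def PhyloDecisive {α : Type} [DecidableEq α] (X : Finset α) (S : Set (Finset α)) : Prop :=
  ∀ T T' : PhyloTree X,
    (∀ q ∈ QSet S, PhyloTree.ResolveIdentically T T' q) → PhyloTree.LabelIso T T'

/-- `S` satisfies the four-way partition property for `X`. -/
def FourWayPartitionProperty {α : Type} [DecidableEq α] (X : Finset α)
    (S : Set (Finset α)) : Prop :=
  ∀ A1 A2 A3 A4 : Finset α,
    A1.Nonempty → A2.Nonempty → A3.Nonempty → A4.Nonempty →
    Disjoint A1 A2 → Disjoint A1 A3 → Disjoint A1 A4 →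
    Disjoint A2 A3 → Disjoint A2 A4 → Disjoint A3 A4 →
    A1 ∪ A2 ∪ A3 ∪ A4 = X →
    ∃ a1 ∈ A1, ∃ a2 ∈ A2, ∃ a3 ∈ A3, ∃ a4 ∈ A4,
      ({a1, a2, a3, a4} : Finset α) ∈ QSet S

/-- `S` is decisive for the particular tree `T`. -/
def DecisiveFor {α : Type} [DecidableEq α] {X : Finset α} (S : Set (Finset α))
    (T : PhyloTree X) : Prop :=
  ∀ T' : PhyloTree X,
    (∀ q ∈ QSet S, PhyloTree.ResolveIdentically T T' q) → PhyloTree.LabelIso T T'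



namespace FWPPAux

variable {α : Type} [DecidableEq α] (X : Finset α) (A : Fin 4 → Finset α)

/-- block of an element -/
def blk (x : α) : Fin 4 :=
  if x ∈ A 0 then 0 else if x ∈ A 1 then 1 else if x ∈ A 2 then 2 else 3

/-- size of block i -/
abbrev nn (i : Fin 4) : ℕ := (A i).card

/-- index within a given block -/
noncomputable def idxIn (i : Fin 4) (x : α) : ℕ :=
  if h : x ∈ A i then ((A i).equivFin ⟨x, h⟩ : ℕ) else 0

/-- index of an element within its block -/
noncomputable def idx (x : α) : ℕ := idxIn A (blk A x) x

lemma blk_eq_of_mem (hdisj : ∀ i j, i ≠ j → Disjoint (A i) (A j))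
    {x : α} {i : Fin 4} (hx : x ∈ A i) : blk A x = i := by
  unfold blk
  split_ifs with h0 h1 h2
  · by_contra hne; exact (Finset.disjoint_left.mp (hdisj 0 i hne) h0) hx
  · by_contra hne; exact (Finset.disjoint_left.mp (hdisj 1 i hne) h1) hx
  · by_contra hne; exact (Finset.disjoint_left.mp (hdisj 2 i hne) h2) hx
  · fin_cases i <;> simp_all

lemma mem_blk (hcov : ∀ x ∈ X, ∃ i, x ∈ A i)
    (hdisj : ∀ i j, i ≠ j → Disjoint (A i) (A j))
    {x : α} (hx : x ∈ X) : x ∈ A (blk A x) := by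
  obtain ⟨i, hi⟩ := hcov x hx
  rwa [blk_eq_of_mem A hdisj hi]

lemma idxIn_lt {x : α} {i : Fin 4} (hx : x ∈ A i) : idxIn A i x < nn A i := by
  unfold idxIn
  rw [dif_pos hx]
  exact ((A i).equivFin ⟨x, hx⟩).isLt

lemma idx_lt {x : α} (hx : x ∈ A (blk A x)) : idx A x < nn A (blk A x) :=
  idxIn_lt A hx

lemma idxIn_inj {x y : α} {i : Fin 4} (hx : x ∈ A i) (hy : y ∈ A i)
    (hi : idxIn A i x = idxIn A i y) : x = y := by
  unfold idxIn at hi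
  rw [dif_pos hx, dif_pos hy] at hi
  have := (A i).equivFin.injective (Fin.val_injective hi)
  exact congrArg Subtype.val this

lemma idx_eq_idxIn {x : α} {i : Fin 4} (hb : blk A x = i) : idx A x = idxIn A i x := by
  unfold idx; rw [hb]

lemma idx_inj {x y : α} (hx : x ∈ A (blk A x)) (hy : y ∈ A (blk A y))
    (hb : blk A x = blk A y) (hi : idx A x = idx A y) : x = y := by
  rw [idx_eq_idxIn A (rfl : blk A x = blk A x), idx_eq_idxIn A hb.symm] at hi
  exact idxIn_inj A hx (hb ▸ hy) hi

lemma exists_idx (hdisj : ∀ i j, i ≠ j → Disjoint (A i) (A j))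
    (i : Fin 4) {j : ℕ} (hj : j < nn A i) :
    ∃ x, x ∈ A i ∧ blk A x = i ∧ idx A x = j := by
  set s := (A i).equivFin.symm ⟨j, hj⟩ with hs
  refine ⟨s.1, s.2, blk_eq_of_mem A hdisj s.2, ?_⟩
  rw [idx_eq_idxIn A (blk_eq_of_mem A hdisj s.2)]
  unfold idxIn
  rw [dif_pos s.2]
  have : ((A i).equivFin ⟨s.1, s.2⟩) = ⟨j, hj⟩ := by
    have : (⟨s.1, s.2⟩ : {x // x ∈ A i}) = s := rfl
    rw [this, hs, Equiv.apply_symm_apply]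
  exact congrArg Fin.val this


/-! ### The tree construction -/

/-- Vertex type: leaves (elements of X), spine vertices, and two hubs. -/
def Vt : Type := {x // x ∈ X} ⊕ ((Σ i : Fin 4, Fin (nn A i - 1)) ⊕ Bool)

instance : Fintype (Vt X A) := by unfold Vt; infer_instance
instance : DecidableEq (Vt X A) := by unfold Vt; infer_instance

/-- hub on side `b` -/
def hub (b : Bool) : Vt X A := Sum.inr (Sum.inr b)

/-- the root hub -/
def uu : Vt X A := hub X A false
/-- the secondary hub -/
def vv : Vt X A := hub X A true

def spine (i : Fin 4) (j : Fin (nn A i - 1)) : Vt X A := Sum.inr (Sum.inl ⟨i, j⟩)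

noncomputable def leafV (x : α) : Vt X A :=
  if h : x ∈ X then Sum.inl ⟨x, h⟩ else uu X A

lemma leafV_eq {x : α} (hx : x ∈ X) : leafV X A x = Sum.inl ⟨x, hx⟩ := dif_pos hx

variable (side : Fin 4 → Bool)

noncomputable def parent : Vt X A → Vt X A
  | Sum.inl ⟨x, _⟩ =>
      if h : min (idx A x) (nn A (blk A x) - 2) < nn A (blk A x) - 1
      then spine X A (blk A x) ⟨min (idx A x) (nn A (blk A x) - 2), h⟩
      else hub X A (side (blk A x))
  | Sum.inr (Sum.inl ⟨i, j⟩) =>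
      if (j : ℕ) = 0 then hub X A (side i)
      else spine X A i ⟨(j : ℕ) - 1, by have := j.isLt; omega⟩
  | Sum.inr (Sum.inr _) => uu X A

def depth : Vt X A → ℕ
  | Sum.inl ⟨x, _⟩ => nn A (blk A x) + 2
  | Sum.inr (Sum.inl ⟨_, j⟩) => (j : ℕ) + 2
  | Sum.inr (Sum.inr b) => cond b 1 0

/-- the graph -/
noncomputable def Gr : SimpleGraph (Vt X A) where
  Adj a b := a ≠ b ∧ (parent X A side a = b ∨ parent X A side b = a)
  symm := ⟨by rintro a b ⟨h1, h2⟩; exact ⟨Ne.symm h1, h2.symm⟩⟩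
  loopless := ⟨by rintro a ⟨h1, -⟩; exact h1 rfl⟩

lemma parent_leaf (x : α) (hx : x ∈ X) :
    parent X A side (Sum.inl ⟨x, hx⟩) =
      if h : min (idx A x) (nn A (blk A x) - 2) < nn A (blk A x) - 1
      then spine X A (blk A x) ⟨min (idx A x) (nn A (blk A x) - 2), h⟩
      else hub X A (side (blk A x)) := rfl

lemma parent_spine (i : Fin 4) (j : Fin (nn A i - 1)) :
    parent X A side (spine X A i j) =
      if (j : ℕ) = 0 then hub X A (side i)
      else spine X A i ⟨(j : ℕ) - 1, by have := j.isLt; omega⟩ := rfl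

lemma parent_hub (b : Bool) : parent X A side (hub X A b) = uu X A := rfl

lemma parent_leafV {x : α} (hx : x ∈ X) :
    parent X A side (leafV X A x) =
      if h : min (idx A x) (nn A (blk A x) - 2) < nn A (blk A x) - 1
      then spine X A (blk A x) ⟨min (idx A x) (nn A (blk A x) - 2), h⟩
      else hub X A (side (blk A x)) := by
  rw [leafV_eq X A hx, parent_leaf]

lemma depth_leaf (x : α) (hx : x ∈ X) :
    depth X A (Sum.inl ⟨x, hx⟩ : Vt X A) = nn A (blk A x) + 2 := rfl
lemma depth_spine (i : Fin 4) (j : Fin (nn A i - 1)) :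
    depth X A (spine X A i j) = (j : ℕ) + 2 := rfl
lemma depth_hub (b : Bool) : depth X A (hub X A b) = cond b 1 0 := rfl

lemma parent_inr (w : Vt X A) : ∃ z, parent X A side w = Sum.inr z := by
  rcases w with ⟨x, hx⟩ | (⟨i, j⟩ | b)
  · rw [parent_leaf]; split_ifs <;> exact ⟨_, rfl⟩
  · rw [show (Sum.inr (Sum.inl ⟨i, j⟩) : Vt X A) = spine X A i j from rfl, parent_spine]
    split_ifs <;> exact ⟨_, rfl⟩
  · exact ⟨_, rfl⟩

lemma depth_parent_lt {w : Vt X A} (hw : w ≠ uu X A) :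
    depth X A (parent X A side w) < depth X A w := by
  rcases w with ⟨x, hx⟩ | (⟨i, j⟩ | b)
  · rw [parent_leaf, depth_leaf]
    split_ifs with h
    · rw [show spine X A (blk A x) ⟨min (idx A x) (nn A (blk A x) - 2), h⟩ =
          Sum.inr (Sum.inl ⟨blk A x, ⟨min (idx A x) (nn A (blk A x) - 2), h⟩⟩) from rfl]
      show min (idx A x) (nn A (blk A x) - 2) + 2 < nn A (blk A x) + 2
      omega
    · rw [depth_hub]; rcases side (blk A x) <;> simp
  · rw [show (Sum.inr (Sum.inl ⟨i, j⟩) : Vt X A) = spine X A i j from rfl, parent_spine,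
      depth_spine]
    split_ifs with h
    · rw [depth_hub]; rcases side i <;> simp
    · rw [depth_spine]
      show ((j : ℕ) - 1) + 2 < (j : ℕ) + 2
      omega
  · rcases b with _ | _
    · exact absurd rfl hw
    · rw [show (Sum.inr (Sum.inr true) : Vt X A) = hub X A true from rfl, parent_hub]
      simp [uu, depth_hub]

lemma depth_parent_le (w : Vt X A) :
    depth X A (parent X A side w) ≤ depth X A w := by
  by_cases hw : w = uu X A
  · subst hw; rw [show uu X A = hub X A false from rfl, parent_hub]; exact le_rfl
  · exact le_of_lt (depth_parent_lt X A side hw)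

lemma parent_ne {w : Vt X A} (hw : w ≠ uu X A) : parent X A side w ≠ w :=
  fun h => absurd (h ▸ depth_parent_lt X A side hw) (lt_irrefl _)

lemma adj_parent {w : Vt X A} (hw : w ≠ uu X A) :
    (Gr X A side).Adj w (parent X A side w) :=
  ⟨Ne.symm (parent_ne X A side hw), Or.inl rfl⟩

lemma reach_uu_aux : ∀ (d : ℕ) (w : Vt X A), depth X A w = d →
    (Gr X A side).Reachable w (uu X A) := by
  intro d
  induction d using Nat.strong_induction_on with
  | _ d ih =>
    intro w hd
    by_cases hw : w = uu X A
    · subst hw; rfl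
    · subst hd
      exact (adj_parent X A side hw).reachable.trans
        (ih _ (depth_parent_lt X A side hw) _ rfl)

lemma reach_uu (w : Vt X A) : (Gr X A side).Reachable w (uu X A) :=
  reach_uu_aux X A side _ w rfl

lemma connected : (Gr X A side).Connected := by
  rw [SimpleGraph.connected_iff]
  refine ⟨fun a b => (reach_uu X A side a).trans (reach_uu X A side b).symm, ⟨uu X A⟩⟩

/-! ### Descendant relation and cuts -/

/-- `below w0 x`: `w0` is an ancestor (or equal) of `x`. -/
def below (w0 x : Vt X A) : Prop := ∃ k : ℕ, (parent X A side)^[k] x = w0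

lemma below_refl (w0 : Vt X A) : below X A side w0 w0 := ⟨0, rfl⟩

lemma below_parent_iff {w0 x : Vt X A} (hx : x ≠ w0) :
    (below X A side w0 x ↔ below X A side w0 (parent X A side x)) := by
  constructor
  · rintro ⟨k, hk⟩
    rcases k with _ | k
    · exact absurd hk hx
    · exact ⟨k, by rwa [Function.iterate_succ_apply] at hk⟩
  · rintro ⟨k, hk⟩
    exact ⟨k + 1, by rwa [Function.iterate_succ_apply]⟩

lemma depth_le_of_below {w0 x : Vt X A} (h : below X A side w0 x) :
    depth X A w0 ≤ depth X A x := by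
  obtain ⟨k, hk⟩ := h
  subst hk
  induction k with
  | zero => exact le_rfl
  | succ k ih =>
    rw [Function.iterate_succ_apply']
    exact (depth_parent_le X A side _).trans ih

lemma not_below_parent {w0 : Vt X A} (hw0 : w0 ≠ uu X A) :
    ¬ below X A side w0 (parent X A side w0) := fun h =>
  absurd (lt_of_le_of_lt (depth_le_of_below X A side h) (depth_parent_lt X A side hw0))
    (lt_irrefl _)

/-- Any walk whose endpoints disagree on `below w0` uses the edge from `w0` to its parent. -/
lemma cross {w0 : Vt X A} {x y : Vt X A} (p : (Gr X A side).Walk x y)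
    (hxy : ¬ (below X A side w0 x ↔ below X A side w0 y)) :
    s(w0, parent X A side w0) ∈ p.edges := by
  induction p with
  | nil => exact absurd Iff.rfl hxy
  | @cons a b c h q ih =>
    by_cases hab : below X A side w0 a ↔ below X A side w0 b
    · have : ¬ (below X A side w0 b ↔ below X A side w0 c) := fun h2 => hxy (hab.trans h2)
      exact List.mem_cons_of_mem _ (ih this)
    · rcases h.2 with h2 | h2
      · -- parent a = b
        have ha : a = w0 := by
          by_contra hne
          exact hab (h2 ▸ below_parent_iff X A side hne)
        subst ha
        rw [h2]
        exact List.mem_cons_self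
      · -- parent b = a
        have hb : b = w0 := by
          by_contra hne
          exact hab (h2 ▸ below_parent_iff X A side hne).symm
        subst hb
        rw [h2]
        rw [Sym2.eq_swap]
        exact List.mem_cons_self

/-- A path whose endpoints agree on `below w0` stays on one side. -/
lemma confine {w0 x y : Vt X A} (p : (Gr X A side).Walk x y) (hp : p.IsPath)
    (hxy : below X A side w0 x ↔ below X A side w0 y) :
    ∀ z ∈ p.support, (below X A side w0 z ↔ below X A side w0 x) := by
  intro z hz
  by_contra hzx
  have hzy : ¬ (below X A side w0 z ↔ below X A side w0 y) := fun h =>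
    hzx (h.trans hxy.symm)
  have e1 : s(w0, parent X A side w0) ∈ (p.takeUntil z hz).edges :=
    cross X A side _ (fun h => hzx h.symm)
  have e2 : s(w0, parent X A side w0) ∈ (p.dropUntil z hz).edges :=
    cross X A side _ hzy
  have hnd : p.edges.Nodup := hp.isTrail.edges_nodup
  rw [← SimpleGraph.Walk.take_spec p hz, SimpleGraph.Walk.edges_append] at hnd
  exact (List.disjoint_of_nodup_append hnd) e1 e2

lemma acyclic : (Gr X A side).IsAcyclic := by
  intro v c hc
  cases c with
  | nil => exact hc.ne_nil rfl
  | @cons _ w _ h q =>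
    have hnd : (SimpleGraph.Walk.cons h q).edges.Nodup := hc.edges_nodup
    rw [SimpleGraph.Walk.edges_cons, List.nodup_cons] at hnd
    rcases h.2 with h2 | h2
    · -- parent v = w
      have hv : v ≠ uu X A := by
        intro hv; subst hv
        rw [show parent X A (side) (uu X A) = uu X A from rfl] at h2
        exact h.1 h2
      have hmm : ¬ (below X A side v w ↔ below X A side v v) := by
        intro hiff
        exact not_below_parent X A side hv (h2 ▸ hiff.mpr (below_refl X A side v))
      have := cross X A side q hmm
      rw [h2] at this
      exact hnd.1 this
    · -- parent w = v
      have hw : w ≠ uu X A := by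
        intro hw; subst hw
        rw [show parent X A (side) (uu X A) = uu X A from rfl] at h2
        exact h.1 h2.symm
      have hmm : ¬ (below X A side w w ↔ below X A side w v) := by
        intro hiff
        exact not_below_parent X A side hw (h2 ▸ hiff.mp (below_refl X A side w))
      have := cross X A side q hmm
      rw [h2, Sym2.eq_swap] at this
      exact hnd.1 this

/-! ### Deciding quartet resolution via cuts -/

/-- If a cut separates `{a,b}` from `{c,d}`, there are disjoint paths. -/
lemma resolves_of_cut {w0 : Vt X A} {a b c d : Vt X A}
    (ha : below X A side w0 a) (hb : below X A side w0 b)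
    (hc : ¬ below X A side w0 c) (hd : ¬ below X A side w0 d) :
    ∃ (p : (Gr X A side).Walk a b) (q : (Gr X A side).Walk c d),
      p.IsPath ∧ q.IsPath ∧ ∀ v ∈ p.support, v ∉ q.support := by
  obtain ⟨wp⟩ := (reach_uu X A side a).trans (reach_uu X A side b).symm
  obtain ⟨wq⟩ := (reach_uu X A side c).trans (reach_uu X A side d).symm
  refine ⟨wp.toPath.1, wq.toPath.1, wp.toPath.2, wq.toPath.2, ?_⟩
  intro v hvp hvq
  have h1 := confine X A side _ wp.toPath.2 (iff_of_true ha hb) v hvp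
  have h2 := confine X A side _ wq.toPath.2 (iff_of_false hc hd) v hvq
  exact hc (h2.mp (h1.mpr ha))

/-- If a cut splits `{a,b}` and also splits `{c,d}`, any two paths intersect. -/
lemma not_resolves_of_cut {w0 : Vt X A} {a b c d : Vt X A}
    (hab : ¬ (below X A side w0 a ↔ below X A side w0 b))
    (hcd : ¬ (below X A side w0 c ↔ below X A side w0 d)) :
    ¬ ∃ (p : (Gr X A side).Walk a b) (q : (Gr X A side).Walk c d),
      p.IsPath ∧ q.IsPath ∧ ∀ v ∈ p.support, v ∉ q.support := by
  rintro ⟨p, q, -, -, hdisj⟩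
  have e1 := cross X A side p hab
  have e2 := cross X A side q hcd
  exact hdisj w0 (p.fst_mem_support_of_mem_edges e1) (q.fst_mem_support_of_mem_edges e2)

/-! ### `below` on leaves -/

lemma hub_inj {b b' : Bool} (h : hub X A b = hub X A b') : b = b' :=
  Sum.inr.inj (Sum.inr.inj h)

lemma spine_ne_hub (i : Fin 4) (j : Fin (nn A i - 1)) (b : Bool) :
    spine X A i j ≠ hub X A b := fun h => by unfold spine hub at h; cases h

lemma inl_ne_spine (z : {x // x ∈ X}) (i : Fin 4) (j : Fin (nn A i - 1)) :
    (Sum.inl z : Vt X A) ≠ spine X A i j := fun h => by simp [spine] at h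

lemma inl_ne_hub (z : {x // x ∈ X}) (b : Bool) :
    (Sum.inl z : Vt X A) ≠ hub X A b := fun h => by simp [hub] at h

lemma spine_inj {i i' : Fin 4} {j : Fin (nn A i - 1)} {j' : Fin (nn A i' - 1)}
    (h : spine X A i j = spine X A i' j') : i = i' ∧ ((j : ℕ) = (j' : ℕ)) := by
  have h1 := Sum.inl.inj (Sum.inr.inj h)
  obtain ⟨h2, h3⟩ := Sigma.mk.inj_iff.mp h1
  subst h2
  exact ⟨rfl, congrArg Fin.val (eq_of_heq h3)⟩

lemma below_leaf_cases {x : α} (hx : x ∈ X) {w0 : Vt X A}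
    (h : below X A side w0 (leafV X A x)) :
    w0 = leafV X A x ∨
    (∃ j : Fin (nn A (blk A x) - 1),
        (j : ℕ) ≤ min (idx A x) (nn A (blk A x) - 2) ∧ w0 = spine X A (blk A x) j) ∨
    w0 = hub X A (side (blk A x)) ∨ w0 = uu X A := by
  obtain ⟨k, hk⟩ := h
  subst hk
  induction k with
  | zero => exact Or.inl rfl
  | succ k ih =>
    rw [Function.iterate_succ_apply']
    rcases ih with h1 | ⟨j, hj, h2⟩ | h3 | h4
    · rw [h1, leafV_eq X A hx, parent_leaf]
      split_ifs with h
      · exact Or.inr (Or.inl ⟨⟨_, h⟩, le_rfl, rfl⟩)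
      · exact Or.inr (Or.inr (Or.inl rfl))
    · rw [h2, parent_spine]
      split_ifs with h
      · exact Or.inr (Or.inr (Or.inl rfl))
      · exact Or.inr (Or.inl ⟨⟨(j : ℕ) - 1, by have := j.isLt; omega⟩, by
          constructor
          · show (j : ℕ) - 1 ≤ _
            omega
          · rfl⟩)
    · rw [h3, parent_hub]
      exact Or.inr (Or.inr (Or.inr rfl))
    · rw [h4]
      exact Or.inr (Or.inr (Or.inr rfl))

lemma spine_chain (i : Fin 4) (jm jt : Fin (nn A i - 1)) (hle : (jt : ℕ) ≤ (jm : ℕ)) :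
    (parent X A side)^[(jm : ℕ) - (jt : ℕ)] (spine X A i jm) = spine X A i jt := by
  set d := (jm : ℕ) - (jt : ℕ) with hd
  clear_value d
  induction d generalizing jt with
  | zero =>
    have : (jm : ℕ) = (jt : ℕ) := by omega
    simp [Fin.ext this]
  | succ d ihd =>
    have hjt1 : (jt : ℕ) + 1 < nn A i - 1 := by have := jm.isLt; omega
    have h1 : (parent X A side)^[d] (spine X A i jm) = spine X A i ⟨(jt : ℕ) + 1, hjt1⟩ := by
      apply ihd ⟨(jt : ℕ) + 1, hjt1⟩ <;> simp <;> omega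
    rw [Function.iterate_succ_apply', h1, parent_spine]
    rw [if_neg (by simp)]
    congr 1

lemma below_spine_iff {x : α} (hx : x ∈ X) (hmem : x ∈ A (blk A x))
    (i : Fin 4) (j : Fin (nn A i - 1)) :
    below X A side (spine X A i j) (leafV X A x) ↔
      blk A x = i ∧ (j : ℕ) ≤ min (idx A x) (nn A (blk A x) - 2) := by
  constructor
  · intro h
    rcases below_leaf_cases X A side hx h with h1 | ⟨j', hj', h2⟩ | h3 | h4
    · rw [leafV_eq X A hx] at h1
      exact absurd h1.symm (inl_ne_spine X A _ _ _)
    · obtain ⟨h5, h6⟩ := spine_inj X A h2.symm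
      subst h5
      exact ⟨rfl, h6 ▸ hj'⟩
    · exact absurd h3 (spine_ne_hub X A _ _ _)
    · exact absurd h4 (spine_ne_hub X A _ _ _)
  · rintro ⟨hbi, hjm⟩
    subst hbi
    have hn2 : 2 ≤ nn A (blk A x) := by have := j.isLt; omega
    have hm : min (idx A x) (nn A (blk A x) - 2) < nn A (blk A x) - 1 := by omega
    have h1 : parent X A side (leafV X A x) =
        spine X A (blk A x) ⟨min (idx A x) (nn A (blk A x) - 2), hm⟩ := by
      rw [leafV_eq X A hx, parent_leaf, dif_pos hm]
    refine ⟨(min (idx A x) (nn A (blk A x) - 2) - (j : ℕ)) + 1, ?_⟩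
    rw [Function.iterate_add_apply, Function.iterate_one, h1]
    have := spine_chain X A side (blk A x) ⟨min (idx A x) (nn A (blk A x) - 2), hm⟩ j
      (by simpa using hjm)
    simpa using this

lemma below_leaf_iff {x y : α} (hx : x ∈ X) (hy : y ∈ X) :
    below X A side (leafV X A y) (leafV X A x) ↔ x = y := by
  constructor
  · intro h
    rcases below_leaf_cases X A side hx h with h1 | ⟨j', hj', h2⟩ | h3 | h4
    · rw [leafV_eq X A hx, leafV_eq X A hy] at h1
      exact (Subtype.mk_eq_mk.mp (Sum.inl.inj h1)).symm
    · rw [leafV_eq X A hy] at h2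
      exact absurd h2 (inl_ne_spine X A _ _ _)
    · rw [leafV_eq X A hy] at h3
      exact absurd h3 (inl_ne_hub X A _ _)
    · rw [leafV_eq X A hy] at h4
      exact absurd h4 (inl_ne_hub X A _ _)
  · rintro rfl
    exact below_refl X A side _

lemma below_hub_side {x : α} (hx : x ∈ X) (hmem : x ∈ A (blk A x)) :
    below X A side (hub X A (side (blk A x))) (leafV X A x) := by
  by_cases h : min (idx A x) (nn A (blk A x) - 2) < nn A (blk A x) - 1
  · -- go to spine 0 then hub
    have h0 : (0 : ℕ) < nn A (blk A x) - 1 := by omega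
    have hsp : below X A side (spine X A (blk A x) ⟨0, h0⟩) (leafV X A x) := by
      rw [below_spine_iff X A side hx hmem]
      exact ⟨rfl, Nat.zero_le _⟩
    obtain ⟨k, hk⟩ := hsp
    refine ⟨k + 1, ?_⟩
    rw [Function.iterate_succ_apply', hk, parent_spine]
    simp
  · refine ⟨1, ?_⟩
    rw [Function.iterate_one, leafV_eq X A hx, parent_leaf, dif_neg h]

lemma below_vv_iff {x : α} (hx : x ∈ X) (hmem : x ∈ A (blk A x)) :
    below X A side (vv X A) (leafV X A x) ↔ side (blk A x) = true := by
  constructor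
  · intro h
    rcases below_leaf_cases X A side hx h with h1 | ⟨j', hj', h2⟩ | h3 | h4
    · rw [leafV_eq X A hx] at h1
      exact absurd h1.symm (inl_ne_hub X A _ _)
    · exact absurd h2.symm (spine_ne_hub X A _ _ _)
    · exact (hub_inj X A h3).symm
    · exact absurd (hub_inj X A h4) Bool.noConfusion
  · intro h
    have := below_hub_side X A side hx hmem
    rwa [h] at this

/-! ### Degrees -/

lemma adj_iff (a b : Vt X A) :
    (Gr X A side).Adj a b ↔ a ≠ b ∧ (parent X A side a = b ∨ parent X A side b = a) :=
  Iff.rfl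

lemma spine_ne_uu (i : Fin 4) (j : Fin (nn A i - 1)) : spine X A i j ≠ uu X A :=
  spine_ne_hub X A i j false

lemma nbhd_leaf {x : α} (hx : x ∈ X) :
    (Gr X A side).neighborSet (leafV X A x) = {parent X A side (leafV X A x)} := by
  ext z
  simp only [SimpleGraph.mem_neighborSet, Set.mem_singleton_iff, adj_iff]
  constructor
  · rintro ⟨hne', hpar | hpar⟩
    · exact hpar.symm
    · obtain ⟨z', hz'⟩ := parent_inr X A side z
      rw [leafV_eq X A hx] at hpar
      exact absurd (hz' ▸ hpar) (by intro h; cases h)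
  · rintro rfl
    have hne' : leafV X A x ≠ uu X A := by
      rw [leafV_eq X A hx]; exact inl_ne_hub X A _ _
    exact ⟨Ne.symm (parent_ne X A side hne'), Or.inl rfl⟩

lemma deg_leaf {x : α} (hx : x ∈ X) :
    ((Gr X A side).neighborSet (leafV X A x)).ncard = 1 := by
  rw [nbhd_leaf X A side hx]
  exact Set.ncard_singleton _

lemma deg_spine (hsub : ∀ i, A i ⊆ X) (hcov : ∀ x ∈ X, ∃ i, x ∈ A i)
    (hdisj : ∀ i j, i ≠ j → Disjoint (A i) (A j))
    (i : Fin 4) (j : Fin (nn A i - 1)) :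
    ((Gr X A side).neighborSet (spine X A i j)).ncard = 3 := by
  have hjlt := j.isLt
  rw [Set.ncard_eq_three]
  by_cases hA : (j : ℕ) + 1 < nn A i - 1
  · -- inner spine vertex: parent, next spine, one leaf
    obtain ⟨x, hxA, hxblk, hxidx⟩ := exists_idx A hdisj i (show (j:ℕ) < nn A i by omega)
    have hxX : x ∈ X := hsub i hxA
    refine ⟨parent X A side (spine X A i j), spine X A i ⟨(j:ℕ)+1, hA⟩, leafV X A x,
      ?_, ?_, ?_, ?_⟩
    · rw [parent_spine]
      split_ifs with h0
      · exact fun h => (spine_ne_hub X A _ _ _) h.symm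
      · intro h
        obtain ⟨-, h2⟩ := spine_inj X A h
        simp only at h2
        omega
    · rw [parent_spine]
      split_ifs with h0
      · rw [leafV_eq X A hxX]
        exact fun h => (inl_ne_hub X A _ _) h.symm
      · rw [leafV_eq X A hxX]
        exact fun h => (inl_ne_spine X A _ _ _) h.symm
    · rw [leafV_eq X A hxX]
      exact fun h => (inl_ne_spine X A _ _ _) h.symm
    · ext z
      simp only [SimpleGraph.mem_neighborSet, adj_iff, Set.mem_insert_iff,
        Set.mem_singleton_iff]
      constructor
      · rintro ⟨hne', hpar | hpar⟩
        · exact Or.inl hpar.symm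
        · rcases z with ⟨y, hy⟩ | (⟨i', j'⟩ | b)
          · -- leaf child
            rw [show (Sum.inl ⟨y, hy⟩ : Vt X A) = leafV X A y from (leafV_eq X A hy).symm,
              parent_leafV X A side hy] at hpar
            split_ifs at hpar with hcnd
            · obtain ⟨h1, h2⟩ := spine_inj X A hpar
              simp only at h2
              have hyblk : blk A y = i := h1
              have hymem : y ∈ A (blk A y) := mem_blk X A hcov hdisj hy
              have hylt : idx A y < nn A (blk A y) := idx_lt A hymem
              have hyidx : idx A y = (j : ℕ) := by
                rw [hyblk] at h2
                have hylt' : idx A y < nn A i := by rw [← hyblk]; exact hylt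
                omega
              have hxmem : x ∈ A (blk A x) := by rw [hxblk]; exact hxA
              have : y = x := by
                apply idx_inj A hymem hxmem
                · rw [hyblk, hxblk]
                · rw [hyidx, hxidx]
              right; right
              subst this
              exact (leafV_eq X A hxX).symm
            · exact absurd hpar.symm (spine_ne_hub X A _ _ _)
          · -- spine child
            rw [show (Sum.inr (Sum.inl ⟨i', j'⟩) : Vt X A) = spine X A i' j' from rfl,
              parent_spine] at hpar
            split_ifs at hpar with h0
            · exact absurd hpar.symm (spine_ne_hub X A _ _ _)
            · obtain ⟨h1, h2⟩ := spine_inj X A hpar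
              simp only at h2
              right; left
              have hsig : (⟨i', j'⟩ : Σ k, Fin (nn A k - 1)) = ⟨i, ⟨(j:ℕ)+1, hA⟩⟩ := by
                subst h1
                exact congrArg (Sigma.mk i')
                  (Fin.ext (show (j' : ℕ) = (j : ℕ) + 1 by omega))
              exact congrArg (fun s => (Sum.inr (Sum.inl s) : Vt X A)) hsig
          · exact absurd hpar.symm (spine_ne_hub X A _ _ _)
      · rintro (rfl | rfl | rfl)
        · exact ((adj_parent X A side (spine_ne_uu X A i j)).symm).symm
        · refine ⟨?_, Or.inr ?_⟩
          · intro h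
            obtain ⟨-, h2⟩ := spine_inj X A h
            simp only at h2
            omega
          · rw [parent_spine]
            rw [if_neg (by simp)]
            congr 1
        · refine ⟨?_, Or.inr ?_⟩
          · exact fun h => (inl_ne_spine X A _ _ _) ((leafV_eq X A hxX) ▸ h.symm)
          · rw [leafV_eq X A hxX, parent_leaf]
            have hcnd : min (idx A x) (nn A (blk A x) - 2) < nn A (blk A x) - 1 := by
              rw [hxblk, hxidx]; omega
            rw [dif_pos hcnd]
            have hsig : (⟨blk A x, ⟨min (idx A x) (nn A (blk A x) - 2), hcnd⟩⟩ :
                Σ k, Fin (nn A k - 1)) = ⟨i, j⟩ := by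
              subst hxblk
              exact congrArg (Sigma.mk (blk A x))
                (Fin.ext (show min (idx A x) (nn A (blk A x) - 2) = (j : ℕ) by omega))
            exact congrArg (fun s => (Sum.inr (Sum.inl s) : Vt X A)) hsig
  · -- last spine vertex: parent and two leaves
    have hj : (j : ℕ) = nn A i - 2 := by omega
    have hn2 : 2 ≤ nn A i := by omega
    obtain ⟨x1, hx1A, hx1blk, hx1idx⟩ := exists_idx A hdisj i (show nn A i - 2 < nn A i by omega)
    obtain ⟨x2, hx2A, hx2blk, hx2idx⟩ := exists_idx A hdisj i (show nn A i - 1 < nn A i by omega)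
    have hx1X : x1 ∈ X := hsub i hx1A
    have hx2X : x2 ∈ X := hsub i hx2A
    have hx1mem : x1 ∈ A (blk A x1) := by rw [hx1blk]; exact hx1A
    have hx2mem : x2 ∈ A (blk A x2) := by rw [hx2blk]; exact hx2A
    have key : ∀ (y : α), y ∈ X → parent X A side (leafV X A y) = spine X A i j →
        y = x1 ∨ y = x2 := by
      intro y hy hpar
      rw [parent_leafV X A side hy] at hpar
      split_ifs at hpar with hcnd
      · obtain ⟨h1, h2⟩ := spine_inj X A hpar
        simp only at h2
        have hymem : y ∈ A (blk A y) := mem_blk X A hcov hdisj hy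
        have hylt : idx A y < nn A (blk A y) := idx_lt A hymem
        rw [h1] at hylt
        rw [h1] at h2
        have : idx A y = nn A i - 2 ∨ idx A y = nn A i - 1 := by omega
        rcases this with h3 | h3
        · left
          apply idx_inj A hymem hx1mem
          · rw [h1, hx1blk]
          · rw [h3, hx1idx]
        · right
          apply idx_inj A hymem hx2mem
          · rw [h1, hx2blk]
          · rw [h3, hx2idx]
      · exact absurd hpar.symm (spine_ne_hub X A _ _ _)
    have parleaf : ∀ (z : α), z ∈ A i → blk A z = i → (idx A z = nn A i - 2 ∨ idx A z = nn A i - 1) →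
        parent X A side (leafV X A z) = spine X A i j := by
      intro z hzA hzblk hzidx
      rw [parent_leafV X A side (hsub i hzA)]
      have hcnd : min (idx A z) (nn A (blk A z) - 2) < nn A (blk A z) - 1 := by
        rw [hzblk]; omega
      rw [dif_pos hcnd]
      have hsig : (⟨blk A z, ⟨min (idx A z) (nn A (blk A z) - 2), hcnd⟩⟩ :
          Σ k, Fin (nn A k - 1)) = ⟨i, j⟩ := by
        subst hzblk
        exact congrArg (Sigma.mk (blk A z))
          (Fin.ext (show min (idx A z) (nn A (blk A z) - 2) = (j : ℕ) by omega))
      exact congrArg (fun s => (Sum.inr (Sum.inl s) : Vt X A)) hsig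
    have hx1x2 : x1 ≠ x2 := by
      intro h
      rw [h, hx2idx] at hx1idx
      omega
    refine ⟨parent X A side (spine X A i j), leafV X A x1, leafV X A x2, ?_, ?_, ?_, ?_⟩
    · rw [parent_spine]
      split_ifs with h0
      · rw [leafV_eq X A hx1X]
        exact fun h => (inl_ne_hub X A _ _) h.symm
      · rw [leafV_eq X A hx1X]
        exact fun h => (inl_ne_spine X A _ _ _) h.symm
    · rw [parent_spine]
      split_ifs with h0
      · rw [leafV_eq X A hx2X]
        exact fun h => (inl_ne_hub X A _ _) h.symm
      · rw [leafV_eq X A hx2X]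
        exact fun h => (inl_ne_spine X A _ _ _) h.symm
    · rw [leafV_eq X A hx1X, leafV_eq X A hx2X]
      intro h
      exact hx1x2 (Subtype.mk_eq_mk.mp (Sum.inl.inj h))
    · ext z
      simp only [SimpleGraph.mem_neighborSet, adj_iff, Set.mem_insert_iff,
        Set.mem_singleton_iff]
      constructor
      · rintro ⟨hne', hpar | hpar⟩
        · exact Or.inl hpar.symm
        · rcases z with ⟨y, hy⟩ | (⟨i', j'⟩ | b)
          · rw [show (Sum.inl ⟨y, hy⟩ : Vt X A) = leafV X A y from (leafV_eq X A hy).symm]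
            rw [show (Sum.inl ⟨y, hy⟩ : Vt X A) = leafV X A y from (leafV_eq X A hy).symm] at hpar
            rcases key y hy hpar with rfl | rfl
            · exact Or.inr (Or.inl rfl)
            · exact Or.inr (Or.inr rfl)
          · rw [show (Sum.inr (Sum.inl ⟨i', j'⟩) : Vt X A) = spine X A i' j' from rfl,
              parent_spine] at hpar
            split_ifs at hpar with h0
            · exact absurd hpar.symm (spine_ne_hub X A _ _ _)
            · obtain ⟨h1, h2⟩ := spine_inj X A hpar
              simp only at h2
              have hlt : (j' : ℕ) < nn A i - 1 := by rw [← h1]; exact j'.isLt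
              omega
          · exact absurd hpar.symm (spine_ne_hub X A _ _ _)
      · rintro (rfl | rfl | rfl)
        · exact ((adj_parent X A side (spine_ne_uu X A i j)).symm).symm
        · refine ⟨?_, Or.inr (parleaf x1 hx1A hx1blk (Or.inl hx1idx))⟩
          rw [leafV_eq X A hx1X]
          exact fun h => (inl_ne_spine X A _ _ _) h.symm
        · refine ⟨?_, Or.inr (parleaf x2 hx2A hx2blk (Or.inr hx2idx))⟩
          rw [leafV_eq X A hx2X]
          exact fun h => (inl_ne_spine X A _ _ _) h.symm

noncomputable def root (hne : ∀ i, (A i).Nonempty) (i : Fin 4) : Vt X A :=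
  if h : 1 < nn A i then spine X A i ⟨0, by omega⟩
  else leafV X A (hne i).choose

lemma root_parent (hne : ∀ i, (A i).Nonempty) (hsub : ∀ i, A i ⊆ X) (hdisj : ∀ i j, i ≠ j → Disjoint (A i) (A j))
    (i : Fin 4) : parent X A side (root X A hne i) = hub X A (side i) := by
  unfold root
  split_ifs with h
  · rw [parent_spine]
    simp
  · have hcard : nn A i = 1 := by
      have h1 : 0 < nn A i := Finset.Nonempty.card_pos (hne i)
      omega
    have hrep : (hne i).choose ∈ A i := (hne i).choose_spec
    have hrepX : (hne i).choose ∈ X := hsub i hrep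
    have hrepblk : blk A (hne i).choose = i := blk_eq_of_mem A hdisj hrep
    rw [parent_leafV X A side hrepX]
    have hcnd : ¬ (min (idx A (hne i).choose) (nn A (blk A (hne i).choose) - 2) <
        nn A (blk A (hne i).choose) - 1) := by
      rw [hrepblk]; omega
    rw [dif_neg hcnd, hrepblk]

lemma root_ne_hub (hne : ∀ i, (A i).Nonempty) (hsub : ∀ i, A i ⊆ X) (i : Fin 4) (b : Bool) :
    root X A hne i ≠ hub X A b := by
  unfold root
  split_ifs with h
  · exact spine_ne_hub X A _ _ _
  · rw [leafV_eq X A (hsub i (hne i).choose_spec)]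
    exact inl_ne_hub X A _ _

lemma root_inj (hne : ∀ i, (A i).Nonempty) (hsub : ∀ i, A i ⊆ X) (hdisj : ∀ i j, i ≠ j → Disjoint (A i) (A j))
    {i i' : Fin 4} (h : i ≠ i') : root X A hne i ≠ root X A hne i' := by
  unfold root
  split_ifs with h1 h2 h2
  · intro he; exact h (spine_inj X A he).1
  · rw [leafV_eq X A (hsub i' (hne i').choose_spec)]
    exact fun he => (inl_ne_spine X A _ _ _) he.symm
  · rw [leafV_eq X A (hsub i (hne i).choose_spec)]
    exact inl_ne_spine X A _ _ _
  · rw [leafV_eq X A (hsub i (hne i).choose_spec),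
      leafV_eq X A (hsub i' (hne i').choose_spec)]
    intro he
    have : (hne i).choose = (hne i').choose := Subtype.mk_eq_mk.mp (Sum.inl.inj he)
    exact Finset.disjoint_left.mp (hdisj i i' h) (hne i).choose_spec
      (this ▸ (hne i').choose_spec)

lemma children_hub (hne : ∀ i, (A i).Nonempty) (hsub : ∀ i, A i ⊆ X) (hcov : ∀ x ∈ X, ∃ i, x ∈ A i)
    (hdisj : ∀ i j, i ≠ j → Disjoint (A i) (A j))
    {z : Vt X A} {b : Bool} (hz : z ≠ hub X A b)
    (hpar : parent X A side z = hub X A b) :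
    (z = vv X A ∧ b = false) ∨ ∃ i, side i = b ∧ z = root X A hne i := by
  rcases z with ⟨y, hy⟩ | (⟨i', j'⟩ | b')
  · rw [show (Sum.inl ⟨y, hy⟩ : Vt X A) = leafV X A y from (leafV_eq X A hy).symm] at hpar ⊢
    rw [parent_leafV X A side hy] at hpar
    split_ifs at hpar with hcnd
    · exact absurd hpar (spine_ne_hub X A _ _ _)
    · right
      refine ⟨blk A y, hub_inj X A hpar, ?_⟩
      have hymem : y ∈ A (blk A y) := mem_blk X A hcov hdisj hy
      have hylt : idx A y < nn A (blk A y) := idx_lt A hymem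
      have hcard : nn A (blk A y) = 1 := by omega
      unfold root
      rw [dif_neg (by omega)]
      have hrep : (hne (blk A y)).choose ∈ A (blk A y) := (hne (blk A y)).choose_spec
      have : y = (hne (blk A y)).choose :=
        Finset.card_le_one.mp (le_of_eq hcard) y hymem _ hrep
      rw [← this]
  · rw [show (Sum.inr (Sum.inl ⟨i', j'⟩) : Vt X A) = spine X A i' j' from rfl] at hpar ⊢
    rw [parent_spine] at hpar
    split_ifs at hpar with h0
    · right
      refine ⟨i', hub_inj X A hpar, ?_⟩
      unfold root
      have : 1 < nn A i' := by have := j'.isLt; omega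
      rw [dif_pos this]
      exact congrArg (fun s => (Sum.inr (Sum.inl s) : Vt X A))
        (congrArg (Sigma.mk i') (Fin.ext h0))
    · exact absurd hpar (spine_ne_hub X A _ _ _)
  · rw [show parent X A side (Sum.inr (Sum.inr b')) = uu X A from rfl] at hpar
    have hb : b = false := (hub_inj X A hpar.symm)
    rcases b' with _ | _
    · exact absurd (hb ▸ rfl) hz
    · exact Or.inl ⟨rfl, hb⟩

lemma deg_hub (hne : ∀ i, (A i).Nonempty) (hsub : ∀ i, A i ⊆ X) (hcov : ∀ x ∈ X, ∃ i, x ∈ A i)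
    (hdisj : ∀ i j, i ≠ j → Disjoint (A i) (A j)) (b : Bool)
    {i1 i2 : Fin 4} (h12 : i1 ≠ i2) (hfib : ∀ i, side i = b ↔ (i = i1 ∨ i = i2)) :
    ((Gr X A side).neighborSet (hub X A b)).ncard = 3 := by
  rw [Set.ncard_eq_three]
  refine ⟨hub X A (!b), root X A hne i1, root X A hne i2, ?_, ?_, ?_, ?_⟩
  · exact fun h => (root_ne_hub X A hne hsub i1 (!b)) h.symm
  · exact fun h => (root_ne_hub X A hne hsub i2 (!b)) h.symm
  · exact root_inj X A hne hsub hdisj h12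
  · ext z
    simp only [SimpleGraph.mem_neighborSet, adj_iff, Set.mem_insert_iff,
      Set.mem_singleton_iff]
    constructor
    · rintro ⟨hne', hpar | hpar⟩
      · rw [parent_hub] at hpar
        rcases b with _ | _
        · exact absurd hpar hne'
        · left; rw [← hpar]; rfl
      · rcases children_hub X A side hne hsub hcov hdisj (Ne.symm hne') hpar with
          ⟨rfl, rfl⟩ | ⟨i, hi, rfl⟩
        · left; rfl
        · rcases (hfib i).mp hi with rfl | rfl
          · right; left; rfl
          · right; right; rfl
    · rintro (rfl | rfl | rfl)
      · rcases b with _ | _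
        · -- b = false, neighbor is vv = hub true
          refine ⟨fun h => Bool.noConfusion (hub_inj X A h), Or.inr ?_⟩
          rw [parent_hub]
          rfl
        · -- b = true, neighbor is uu = hub false
          refine ⟨fun h => Bool.noConfusion (hub_inj X A h), Or.inl ?_⟩
          rw [parent_hub]
          rfl
      · refine ⟨fun h => (root_ne_hub X A hne hsub i1 b) h.symm, Or.inr ?_⟩
        rw [root_parent X A side hne hsub hdisj, (hfib i1).mpr (Or.inl rfl)]
      · refine ⟨fun h => (root_ne_hub X A hne hsub i2 b) h.symm, Or.inr ?_⟩
        rw [root_parent X A side hne hsub hdisj, (hfib i2).mpr (Or.inr rfl)]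

/-! ### The phylogenetic tree -/

noncomputable def tree (hne : ∀ i, (A i).Nonempty) (hsub : ∀ i, A i ⊆ X)
    (hcov : ∀ x ∈ X, ∃ i, x ∈ A i) (hdisj : ∀ i j, i ≠ j → Disjoint (A i) (A j))
    (hfib : ∀ b : Bool, ∃ i1 i2 : Fin 4, i1 ≠ i2 ∧ ∀ i, (side i = b ↔ (i = i1 ∨ i = i2))) :
    PhyloTree X where
  V := Vt X A
  fintypeV := inferInstance
  G := Gr X A side
  connected := connected X A side
  acyclic := acyclic X A side
  leaf := leafV X A
  leaf_inj := by
    intro x hx y hy hxy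
    rw [leafV_eq X A hx, leafV_eq X A hy] at hxy
    exact Subtype.mk_eq_mk.mp (Sum.inl.inj hxy)
  leaf_degree := by
    intro x hx
    exact deg_leaf X A side hx
  degree_one_is_leaf := by
    intro v hv
    rcases v with ⟨y, hy⟩ | (⟨i, j⟩ | b)
    · exact ⟨y, hy, leafV_eq X A hy⟩
    · exfalso
      have := deg_spine X A side hsub hcov hdisj i j
      rw [show (Sum.inr (Sum.inl ⟨i, j⟩) : Vt X A) = spine X A i j from rfl] at hv
      omega
    · exfalso
      obtain ⟨i1, i2, h12, hf⟩ := hfib b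
      have := deg_hub X A side hne hsub hcov hdisj b h12 hf
      rw [show (Sum.inr (Sum.inr b) : Vt X A) = hub X A b from rfl] at hv
      omega
  internal_degree := by
    intro v hv
    rcases v with ⟨y, hy⟩ | (⟨i, j⟩ | b)
    · exact absurd (leafV_eq X A hy) (hv y hy)
    · exact deg_spine X A side hsub hcov hdisj i j
    · obtain ⟨i1, i2, h12, hf⟩ := hfib b
      exact deg_hub X A side hne hsub hcov hdisj b h12 hf

/-! ### Cuts for the main argument -/

lemma cut_exists (hne : ∀ i, (A i).Nonempty) (hsub : ∀ i, A i ⊆ X)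
    (hcov : ∀ x ∈ X, ∃ i, x ∈ A i) (hdisj : ∀ i j, i ≠ j → Disjoint (A i) (A j))
    (i : Fin 4) (j : ℕ) (hv : j = 0 ∨ j ≤ nn A i - 2) :
    ∃ w0 : Vt X A, w0 ≠ uu X A ∧
      ∀ x ∈ X, (below X A side w0 (leafV X A x) ↔ (blk A x = i ∧ j ≤ idx A x)) := by
  by_cases h2 : 1 < nn A i
  · have hjlt : j < nn A i - 1 := by omega
    refine ⟨spine X A i ⟨j, hjlt⟩, spine_ne_uu X A i _, ?_⟩
    intro x hx
    have hmem : x ∈ A (blk A x) := mem_blk X A hcov hdisj hx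
    rw [below_spine_iff X A side hx hmem]
    constructor
    · rintro ⟨hb, hj⟩
      refine ⟨hb, ?_⟩
      simp only at hj
      omega
    · rintro ⟨hb, hj⟩
      refine ⟨hb, ?_⟩
      have hlt : idx A x < nn A (blk A x) := idx_lt A hmem
      rw [hb] at hlt ⊢
      simp only
      omega
  · have hcard : nn A i = 1 := by
      have h1 : 0 < nn A i := Finset.Nonempty.card_pos (hne i)
      omega
    have hrep : (hne i).choose ∈ A i := (hne i).choose_spec
    have hrepX : (hne i).choose ∈ X := hsub i hrep
    refine ⟨leafV X A (hne i).choose, by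
      rw [leafV_eq X A hrepX]; exact inl_ne_hub X A _ _, ?_⟩
    intro x hx
    rw [below_leaf_iff X A side hx hrepX]
    constructor
    · rintro rfl
      refine ⟨blk_eq_of_mem A hdisj hrep, ?_⟩
      have : idx A (hne i).choose < nn A (blk A (hne i).choose) :=
        idx_lt A (mem_blk X A hcov hdisj hrepX)
      rw [blk_eq_of_mem A hdisj hrep] at this
      omega
    · rintro ⟨hb, hj⟩
      have hmem : x ∈ A i := by rw [← hb]; exact mem_blk X A hcov hdisj hx
      exact Finset.card_le_one.mp (le_of_eq hcard) x hmem _ hrep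

/-! ### The combinatorial core -/

set_option maxHeartbeats 2000000 in
lemma core_aux (N na nb nc nd : ℕ) (pa pb pc pd : Prop)
    (bnda : pa → na < N) (bndb : pb → nb < N) (bndc : pc → nc < N) (bndd : pd → nd < N)
    (dab : pa → pb → na ≠ nb) (dac : pa → pc → na ≠ nc) (dad : pa → pd → na ≠ nd)
    (dbc : pb → pc → nb ≠ nc) (dbd : pb → pd → nb ≠ nd) (dcd : pc → pd → nc ≠ nd)
    (h2 : (pa ∧ pb) ∨ (pa ∧ pc) ∨ (pa ∧ pd) ∨ (pb ∧ pc) ∨ (pb ∧ pd) ∨ (pc ∧ pd)) :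
    ∃ j, (j = 0 ∨ j ≤ N - 2) ∧
      (((pa ∧ j ≤ na) ∧ (pb ∧ j ≤ nb) ∧ ¬(pc ∧ j ≤ nc) ∧ ¬(pd ∧ j ≤ nd)) ∨
       (¬(pa ∧ j ≤ na) ∧ ¬(pb ∧ j ≤ nb) ∧ (pc ∧ j ≤ nc) ∧ (pd ∧ j ≤ nd)) ∨
       (((pa ∧ j ≤ na) ↔ ¬(pb ∧ j ≤ nb)) ∧ ((pc ∧ j ≤ nc) ↔ ¬(pd ∧ j ≤ nd)))) := by
  by_cases ha : pa <;> by_cases hb : pb <;> by_cases hc : pc <;> by_cases hd : pd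
  · have b1 := bnda ha; have b2 := bndb hb; have b3 := bndc hc; have b4 := bndd hd; have e1 := dab ha hb; have e2 := dac ha hc; have e3 := dad ha hd; have e4 := dbc hb hc; have e5 := dbd hb hd; have e6 := dcd hc hd
    refine ⟨(max (max (max (max (max (min na nb) (min na nc)) (min na nd)) (min nb nc)) (min nb nd)) (min nc nd)), by omega, ?_⟩
    simp only [ha, hb, hc, hd, true_and, false_and, and_true, and_false,
      not_false_eq_true, not_true_eq_false, true_iff, iff_true, false_iff, iff_false,
      true_or, or_true, false_or, or_false]
    omega
  · have b1 := bnda ha; have b2 := bndb hb; have b3 := bndc hc; have e1 := dab ha hb; have e2 := dac ha hc; have e4 := dbc hb hc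
    refine ⟨(max (max (min na nb) (min na nc)) (min nb nc)), by omega, ?_⟩
    simp only [ha, hb, hc, hd, true_and, false_and, and_true, and_false,
      not_false_eq_true, not_true_eq_false, true_iff, iff_true, false_iff, iff_false,
      true_or, or_true, false_or, or_false]
    omega
  · have b1 := bnda ha; have b2 := bndb hb; have b4 := bndd hd; have e1 := dab ha hb; have e3 := dad ha hd; have e5 := dbd hb hd
    refine ⟨(max (max (min na nb) (min na nd)) (min nb nd)), by omega, ?_⟩
    simp only [ha, hb, hc, hd, true_and, false_and, and_true, and_false,
      not_false_eq_true, not_true_eq_false, true_iff, iff_true, false_iff, iff_false,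
      true_or, or_true, false_or, or_false]
    omega
  · have b1 := bnda ha; have b2 := bndb hb; have e1 := dab ha hb
    refine ⟨(min na nb), by omega, ?_⟩
    simp only [ha, hb, hc, hd, true_and, false_and, and_true, and_false,
      not_false_eq_true, not_true_eq_false, true_iff, iff_true, false_iff, iff_false,
      true_or, or_true, false_or, or_false]
    omega
  · have b1 := bnda ha; have b3 := bndc hc; have b4 := bndd hd; have e2 := dac ha hc; have e3 := dad ha hd; have e6 := dcd hc hd
    refine ⟨(max (max (min na nc) (min na nd)) (min nc nd)), by omega, ?_⟩
    simp only [ha, hb, hc, hd, true_and, false_and, and_true, and_false,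
      not_false_eq_true, not_true_eq_false, true_iff, iff_true, false_iff, iff_false,
      true_or, or_true, false_or, or_false]
    omega
  · have b1 := bnda ha; have b3 := bndc hc; have e2 := dac ha hc
    refine ⟨(min na nc), by omega, ?_⟩
    simp only [ha, hb, hc, hd, true_and, false_and, and_true, and_false,
      not_false_eq_true, not_true_eq_false, true_iff, iff_true, false_iff, iff_false,
      true_or, or_true, false_or, or_false]
    omega
  · have b1 := bnda ha; have b4 := bndd hd; have e3 := dad ha hd
    refine ⟨(min na nd), by omega, ?_⟩
    simp only [ha, hb, hc, hd, true_and, false_and, and_true, and_false,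
      not_false_eq_true, not_true_eq_false, true_iff, iff_true, false_iff, iff_false,
      true_or, or_true, false_or, or_false]
    omega
  · exact absurd h2 (by
      rintro (⟨h,h'⟩|⟨h,h'⟩|⟨h,h'⟩|⟨h,h'⟩|⟨h,h'⟩|⟨h,h'⟩) <;>
        first | exact ha h | exact ha h' | exact hb h | exact hb h' | exact hc h |
          exact hc h' | exact hd h | exact hd h')
  · have b2 := bndb hb; have b3 := bndc hc; have b4 := bndd hd; have e4 := dbc hb hc; have e5 := dbd hb hd; have e6 := dcd hc hd
    refine ⟨(max (max (min nb nc) (min nb nd)) (min nc nd)), by omega, ?_⟩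
    simp only [ha, hb, hc, hd, true_and, false_and, and_true, and_false,
      not_false_eq_true, not_true_eq_false, true_iff, iff_true, false_iff, iff_false,
      true_or, or_true, false_or, or_false]
    omega
  · have b2 := bndb hb; have b3 := bndc hc; have e4 := dbc hb hc
    refine ⟨(min nb nc), by omega, ?_⟩
    simp only [ha, hb, hc, hd, true_and, false_and, and_true, and_false,
      not_false_eq_true, not_true_eq_false, true_iff, iff_true, false_iff, iff_false,
      true_or, or_true, false_or, or_false]
    omega
  · have b2 := bndb hb; have b4 := bndd hd; have e5 := dbd hb hd
    refine ⟨(min nb nd), by omega, ?_⟩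
    simp only [ha, hb, hc, hd, true_and, false_and, and_true, and_false,
      not_false_eq_true, not_true_eq_false, true_iff, iff_true, false_iff, iff_false,
      true_or, or_true, false_or, or_false]
    omega
  · exact absurd h2 (by
      rintro (⟨h,h'⟩|⟨h,h'⟩|⟨h,h'⟩|⟨h,h'⟩|⟨h,h'⟩|⟨h,h'⟩) <;>
        first | exact ha h | exact ha h' | exact hb h | exact hb h' | exact hc h |
          exact hc h' | exact hd h | exact hd h')
  · have b3 := bndc hc; have b4 := bndd hd; have e6 := dcd hc hd
    refine ⟨(min nc nd), by omega, ?_⟩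
    simp only [ha, hb, hc, hd, true_and, false_and, and_true, and_false,
      not_false_eq_true, not_true_eq_false, true_iff, iff_true, false_iff, iff_false,
      true_or, or_true, false_or, or_false]
    omega
  · exact absurd h2 (by
      rintro (⟨h,h'⟩|⟨h,h'⟩|⟨h,h'⟩|⟨h,h'⟩|⟨h,h'⟩|⟨h,h'⟩) <;>
        first | exact ha h | exact ha h' | exact hb h | exact hb h' | exact hc h |
          exact hc h' | exact hd h | exact hd h')
  · exact absurd h2 (by
      rintro (⟨h,h'⟩|⟨h,h'⟩|⟨h,h'⟩|⟨h,h'⟩|⟨h,h'⟩|⟨h,h'⟩) <;>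
        first | exact ha h | exact ha h' | exact hb h | exact hb h' | exact hc h |
          exact hc h' | exact hd h | exact hd h')
  · exact absurd h2 (by
      rintro (⟨h,h'⟩|⟨h,h'⟩|⟨h,h'⟩|⟨h,h'⟩|⟨h,h'⟩|⟨h,h'⟩) <;>
        first | exact ha h | exact ha h' | exact hb h | exact hb h' | exact hc h |
          exact hc h' | exact hd h | exact hd h')
lemma core (hcov : ∀ x ∈ X, ∃ i, x ∈ A i) (hdisj : ∀ i j, i ≠ j → Disjoint (A i) (A j))
    {a b c d : α} (haX : a ∈ X) (hbX : b ∈ X) (hcX : c ∈ X) (hdX : d ∈ X)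
    (hab : a ≠ b) (hac : a ≠ c) (had : a ≠ d) (hbc : b ≠ c) (hbd : b ≠ d) (hcd : c ≠ d)
    (hcol : blk A a = blk A b ∨ blk A a = blk A c ∨ blk A a = blk A d ∨
      blk A b = blk A c ∨ blk A b = blk A d ∨ blk A c = blk A d) :
    ∃ (i : Fin 4) (j : ℕ), (j = 0 ∨ j ≤ nn A i - 2) ∧
      ((((blk A a = i ∧ j ≤ idx A a)) ∧ ((blk A b = i ∧ j ≤ idx A b)) ∧
          ¬((blk A c = i ∧ j ≤ idx A c)) ∧ ¬((blk A d = i ∧ j ≤ idx A d))) ∨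
       (¬((blk A a = i ∧ j ≤ idx A a)) ∧ ¬((blk A b = i ∧ j ≤ idx A b)) ∧
          ((blk A c = i ∧ j ≤ idx A c)) ∧ ((blk A d = i ∧ j ≤ idx A d))) ∨
       ((((blk A a = i ∧ j ≤ idx A a)) ↔ ¬((blk A b = i ∧ j ≤ idx A b))) ∧
          (((blk A c = i ∧ j ≤ idx A c)) ↔ ¬((blk A d = i ∧ j ≤ idx A d))))) := by
  have hma : a ∈ A (blk A a) := mem_blk X A hcov hdisj haX
  have hmb : b ∈ A (blk A b) := mem_blk X A hcov hdisj hbX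
  have hmc : c ∈ A (blk A c) := mem_blk X A hcov hdisj hcX
  have hmd : d ∈ A (blk A d) := mem_blk X A hcov hdisj hdX
  obtain ⟨i, hpair⟩ : ∃ i : Fin 4,
      (blk A a = i ∧ blk A b = i) ∨ (blk A a = i ∧ blk A c = i) ∨
      (blk A a = i ∧ blk A d = i) ∨ (blk A b = i ∧ blk A c = i) ∨
      (blk A b = i ∧ blk A d = i) ∨ (blk A c = i ∧ blk A d = i) := by
    rcases hcol with h | h | h | h | h | h
    · exact ⟨blk A b, Or.inl ⟨h, rfl⟩⟩
    · exact ⟨blk A c, Or.inr (Or.inl ⟨h, rfl⟩)⟩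
    · exact ⟨blk A d, Or.inr (Or.inr (Or.inl ⟨h, rfl⟩))⟩
    · exact ⟨blk A c, Or.inr (Or.inr (Or.inr (Or.inl ⟨h, rfl⟩)))⟩
    · exact ⟨blk A d, Or.inr (Or.inr (Or.inr (Or.inr (Or.inl ⟨h, rfl⟩))))⟩
    · exact ⟨blk A d, Or.inr (Or.inr (Or.inr (Or.inr (Or.inr ⟨h, rfl⟩))))⟩
  obtain ⟨j, hv, hpat⟩ := core_aux (nn A i) (idx A a) (idx A b) (idx A c) (idx A d)
    (blk A a = i) (blk A b = i) (blk A c = i) (blk A d = i)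
    (fun h => by have := idx_lt A hma; rwa [h] at this)
    (fun h => by have := idx_lt A hmb; rwa [h] at this)
    (fun h => by have := idx_lt A hmc; rwa [h] at this)
    (fun h => by have := idx_lt A hmd; rwa [h] at this)
    (fun h1 h2 hiq => hab (idx_inj A hma hmb (h1.trans h2.symm) hiq))
    (fun h1 h2 hiq => hac (idx_inj A hma hmc (h1.trans h2.symm) hiq))
    (fun h1 h2 hiq => had (idx_inj A hma hmd (h1.trans h2.symm) hiq))
    (fun h1 h2 hiq => hbc (idx_inj A hmb hmc (h1.trans h2.symm) hiq))
    (fun h1 h2 hiq => hbd (idx_inj A hmb hmd (h1.trans h2.symm) hiq))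
    (fun h1 h2 hiq => hcd (idx_inj A hmc hmd (h1.trans h2.symm) hiq))
    hpair
  exact ⟨i, j, hv, hpat⟩

/-! ### Tree-level resolution lemmas -/

lemma tree_resolves_of_pattern (hne : ∀ i, (A i).Nonempty) (hsub : ∀ i, A i ⊆ X)
    (hcov : ∀ x ∈ X, ∃ i, x ∈ A i) (hdisj : ∀ i j, i ≠ j → Disjoint (A i) (A j))
    (hfib : ∀ b : Bool, ∃ i1 i2 : Fin 4, i1 ≠ i2 ∧ ∀ i, (side i = b ↔ (i = i1 ∨ i = i2)))
    {a b c d : α} (haX : a ∈ X) (hbX : b ∈ X) (hcX : c ∈ X) (hdX : d ∈ X)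
    {i : Fin 4} {j : ℕ} (hv : j = 0 ∨ j ≤ nn A i - 2)
    (hpat : (((blk A a = i ∧ j ≤ idx A a)) ∧ ((blk A b = i ∧ j ≤ idx A b)) ∧
          ¬((blk A c = i ∧ j ≤ idx A c)) ∧ ¬((blk A d = i ∧ j ≤ idx A d))) ∨
       (¬((blk A a = i ∧ j ≤ idx A a)) ∧ ¬((blk A b = i ∧ j ≤ idx A b)) ∧
          ((blk A c = i ∧ j ≤ idx A c)) ∧ ((blk A d = i ∧ j ≤ idx A d)))) :
    (tree X A side hne hsub hcov hdisj hfib).ResolvesAs a b c d := by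
  obtain ⟨w0, hw0, hcut⟩ := cut_exists X A side hne hsub hcov hdisj i j hv
  show ∃ (p : (Gr X A side).Walk (leafV X A a) (leafV X A b))
      (q : (Gr X A side).Walk (leafV X A c) (leafV X A d)),
      p.IsPath ∧ q.IsPath ∧ ∀ v ∈ p.support, v ∉ q.support
  rcases hpat with ⟨h1, h2, h3, h4⟩ | ⟨h1, h2, h3, h4⟩
  · exact resolves_of_cut X A side ((hcut a haX).mpr h1) ((hcut b hbX).mpr h2)
      (fun hb => h3 ((hcut c hcX).mp hb)) (fun hb => h4 ((hcut d hdX).mp hb))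
  · obtain ⟨q, p, hq, hp, hdisj'⟩ := resolves_of_cut X A side
      ((hcut c hcX).mpr h3) ((hcut d hdX).mpr h4)
      (fun hb => h1 ((hcut a haX).mp hb)) (fun hb => h2 ((hcut b hbX).mp hb))
    exact ⟨p, q, hp, hq, fun v hvp hvq => hdisj' v hvq hvp⟩

lemma tree_not_resolves_of_pattern (hne : ∀ i, (A i).Nonempty) (hsub : ∀ i, A i ⊆ X)
    (hcov : ∀ x ∈ X, ∃ i, x ∈ A i) (hdisj : ∀ i j, i ≠ j → Disjoint (A i) (A j))
    (hfib : ∀ b : Bool, ∃ i1 i2 : Fin 4, i1 ≠ i2 ∧ ∀ i, (side i = b ↔ (i = i1 ∨ i = i2)))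
    {a b c d : α} (haX : a ∈ X) (hbX : b ∈ X) (hcX : c ∈ X) (hdX : d ∈ X)
    {i : Fin 4} {j : ℕ} (hv : j = 0 ∨ j ≤ nn A i - 2)
    (hpat : (((blk A a = i ∧ j ≤ idx A a)) ↔ ¬((blk A b = i ∧ j ≤ idx A b))) ∧
          (((blk A c = i ∧ j ≤ idx A c)) ↔ ¬((blk A d = i ∧ j ≤ idx A d)))) :
    ¬ (tree X A side hne hsub hcov hdisj hfib).ResolvesAs a b c d := by
  obtain ⟨w0, hw0, hcut⟩ := cut_exists X A side hne hsub hcov hdisj i j hv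
  intro hres
  have hres' : ∃ (p : (Gr X A side).Walk (leafV X A a) (leafV X A b))
      (q : (Gr X A side).Walk (leafV X A c) (leafV X A d)),
      p.IsPath ∧ q.IsPath ∧ ∀ v ∈ p.support, v ∉ q.support := hres
  apply not_resolves_of_cut X A side (w0 := w0) ?_ ?_ hres'
  · rw [hcut a haX, hcut b hbX]
    intro hiff
    by_cases hMb : (blk A b = i ∧ j ≤ idx A b)
    · exact (hpat.1.mp (hiff.mpr hMb)) hMb
    · exact hMb (hiff.mp (hpat.1.mpr hMb))
  · rw [hcut c hcX, hcut d hdX]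
    intro hiff
    by_cases hMd : (blk A d = i ∧ j ≤ idx A d)
    · exact (hpat.2.mp (hiff.mpr hMd)) hMd
    · exact hMd (hiff.mp (hpat.2.mpr hMd))

end FWPPAux

/-! ### Label isomorphisms preserve resolution -/

lemma resolves_of_labelIso {α : Type} [DecidableEq α] {X : Finset α} {T T' : PhyloTree X}
    (h : T.LabelIso T') {a b c d : α} (haX : a ∈ X) (hbX : b ∈ X) (hcX : c ∈ X)
    (hdX : d ∈ X) (hr : T.ResolvesAs a b c d) : T'.ResolvesAs a b c d := by
  obtain ⟨φ, hφ⟩ := h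
  obtain ⟨p, q, hp, hq, hdisj⟩ := hr
  have hinj : Function.Injective (⇑φ.toHom : T.V → T'.V) := fun u v huv =>
    φ.toEquiv.injective huv
  refine ⟨(p.map φ.toHom).copy (hφ a haX) (hφ b hbX),
    (q.map φ.toHom).copy (hφ c hcX) (hφ d hdX), ?_, ?_, ?_⟩
  · rw [SimpleGraph.Walk.isPath_copy]
    exact SimpleGraph.Walk.map_isPath_of_injective hinj hp
  · rw [SimpleGraph.Walk.isPath_copy]
    exact SimpleGraph.Walk.map_isPath_of_injective hinj hq
  · intro v hvp hvq
    rw [SimpleGraph.Walk.support_copy, SimpleGraph.Walk.support_map] at hvp hvq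
    obtain ⟨w, hw, rfl⟩ := List.mem_map.mp hvp
    obtain ⟨w', hw', hww'⟩ := List.mem_map.mp hvq
    exact hdisj w hw (hinj hww' ▸ hw')

lemma card_four_distinct {α : Type} [DecidableEq α] {a b c d : α}
    (h : ({a, b, c, d} : Finset α).card = 4) :
    a ≠ b ∧ a ≠ c ∧ a ≠ d ∧ b ≠ c ∧ b ≠ d ∧ c ≠ d := by
  have hb2 := Finset.card_insert_le b (insert c ({d} : Finset α))
  have hb3 := Finset.card_insert_le c ({d} : Finset α)
  have hb4 := Finset.card_insert_le a (insert c ({d} : Finset α))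
  have hb5 := Finset.card_insert_le a (insert b ({d} : Finset α))
  rw [Finset.card_singleton] at hb3
  refine ⟨fun h1 => ?_, fun h1 => ?_, fun h1 => ?_, fun h1 => ?_, fun h1 => ?_,
    fun h1 => ?_⟩
  · rw [Finset.insert_eq_self.mpr (show a ∈ ({b, c, d} : Finset α) by simp [h1])] at h
    omega
  · rw [Finset.insert_eq_self.mpr (show a ∈ ({b, c, d} : Finset α) by simp [h1])] at h
    omega
  · rw [Finset.insert_eq_self.mpr (show a ∈ ({b, c, d} : Finset α) by simp [h1])] at h
    omega
  · rw [Finset.insert_eq_self.mpr (show b ∈ ({c, d} : Finset α) by simp [h1])] at h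
    have := Finset.card_insert_le a (insert c ({d} : Finset α))
    have h2 := Finset.card_insert_le c ({d} : Finset α)
    omega
  · rw [Finset.insert_eq_self.mpr (show b ∈ ({c, d} : Finset α) by simp [h1])] at h
    omega
  · rw [Finset.insert_eq_self.mpr (show c ∈ ({d} : Finset α) by simp [h1])] at h
    have h2 := Finset.card_insert_le b ({d} : Finset α)
    rw [Finset.card_singleton] at h2
    omega

/-- if `S` is phylogenetically decisive for `X` then `S` satisfies the
four-way partition property for `X`. -/
theorem fourWayPartitionProperty_of_decisive {α : Type} [DecidableEq α]
    (X : Finset α) (hX : 4 ≤ X.card)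
    (S : Set (Finset α)) (hS : ∀ Y ∈ S, Y ⊆ X)
    (hdec : PhyloDecisive X S) :
    FourWayPartitionProperty X S := by
  intro A1 A2 A3 A4 hn1 hn2 hn3 hn4 d12 d13 d14 d23 d24 d34 hcup
  by_contra hcon
  push_neg at hcon
  set A : Fin 4 → Finset α := ![A1, A2, A3, A4] with hA
  have hne : ∀ i, (A i).Nonempty := by
    intro i; fin_cases i <;> assumption
  have hcov : ∀ x ∈ X, ∃ i, x ∈ A i := by
    intro x hx
    rw [← hcup] at hx
    rcases Finset.mem_union.mp hx with hx | hx
    · rcases Finset.mem_union.mp hx with hx | hx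
      · rcases Finset.mem_union.mp hx with hx | hx
        · exact ⟨0, hx⟩
        · exact ⟨1, hx⟩
      · exact ⟨2, hx⟩
    · exact ⟨3, hx⟩
  have hsub : ∀ i, A i ⊆ X := by
    intro i x hx
    rw [← hcup]
    fin_cases i
    · exact Finset.mem_union_left _ (Finset.mem_union_left _ (Finset.mem_union_left _ hx))
    · exact Finset.mem_union_left _ (Finset.mem_union_left _ (Finset.mem_union_right _ hx))
    · exact Finset.mem_union_left _ (Finset.mem_union_right _ hx)
    · exact Finset.mem_union_right _ hx
  have hdisj : ∀ i j, i ≠ j → Disjoint (A i) (A j) := by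
    intro i j hij
    fin_cases i <;> fin_cases j <;>
      first
      | exact absurd rfl hij
      | exact d12 | exact d13 | exact d14 | exact d23 | exact d24 | exact d34
      | exact d12.symm | exact d13.symm | exact d14.symm | exact d23.symm
      | exact d24.symm | exact d34.symm
  set side1 : Fin 4 → Bool := ![false, false, true, true] with hside1
  set side2 : Fin 4 → Bool := ![false, true, false, true] with hside2
  have hfib1 : ∀ b : Bool, ∃ i1 i2 : Fin 4, i1 ≠ i2 ∧ ∀ i, (side1 i = b ↔ (i = i1 ∨ i = i2)) := by
    intro b
    rcases b with _ | _
    · exact ⟨0, 1, by decide, by rw [hside1]; decide⟩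
    · exact ⟨2, 3, by decide, by rw [hside1]; decide⟩
  have hfib2 : ∀ b : Bool, ∃ i1 i2 : Fin 4, i1 ≠ i2 ∧ ∀ i, (side2 i = b ↔ (i = i1 ∨ i = i2)) := by
    intro b
    rcases b with _ | _
    · exact ⟨0, 2, by decide, by rw [hside2]; decide⟩
    · exact ⟨1, 3, by decide, by rw [hside2]; decide⟩
  set T : PhyloTree X := FWPPAux.tree X A side1 hne hsub hcov hdisj hfib1 with hT
  set T' : PhyloTree X := FWPPAux.tree X A side2 hne hsub hcov hdisj hfib2 with hT'
  -- the two trees resolve every quartet of Q_S identically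
  have hagree : ∀ q ∈ QSet S, PhyloTree.ResolveIdentically T T' q := by
    rintro q ⟨hq4, Y, hYS, hqY⟩ a b c d habcd
    have hsubX : ({a, b, c, d} : Finset α) ⊆ X := habcd ▸ (hqY.trans (hS Y hYS))
    have haX : a ∈ X := hsubX (by simp)
    have hbX : b ∈ X := hsubX (by simp)
    have hcX : c ∈ X := hsubX (by simp)
    have hdX : d ∈ X := hsubX (by simp)
    have hcard : ({a, b, c, d} : Finset α).card = 4 := by rw [habcd]; exact hq4
    obtain ⟨hab, hac, had, hbc, hbd, hcd⟩ := card_four_distinct hcard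
    -- two of the four leaves lie in a common block
    have hcol : FWPPAux.blk A a = FWPPAux.blk A b ∨ FWPPAux.blk A a = FWPPAux.blk A c ∨
        FWPPAux.blk A a = FWPPAux.blk A d ∨ FWPPAux.blk A b = FWPPAux.blk A c ∨
        FWPPAux.blk A b = FWPPAux.blk A d ∨ FWPPAux.blk A c = FWPPAux.blk A d := by
      by_contra hnc
      push_neg at hnc
      obtain ⟨g1, g2, g3, g4, g5, g6⟩ := hnc
      -- then the four blocks are pairwise distinct, giving a transversal quartet in Q_S
      have hall : ∀ i : Fin 4, i = FWPPAux.blk A a ∨ i = FWPPAux.blk A b ∨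
          i = FWPPAux.blk A c ∨ i = FWPPAux.blk A d := by
        intro i
        by_contra hni
        push_neg at hni
        obtain ⟨k1, k2, k3, k4⟩ := hni
        have h5 : ({FWPPAux.blk A a, FWPPAux.blk A b, FWPPAux.blk A c, FWPPAux.blk A d, i} :
            Finset (Fin 4)).card = 5 := by
          rw [Finset.card_insert_of_notMem (by
              simp only [Finset.mem_insert, Finset.mem_singleton]
              push_neg
              exact ⟨g1, g2, g3, fun h => k1 h.symm⟩),
            Finset.card_insert_of_notMem (by
              simp only [Finset.mem_insert, Finset.mem_singleton]
              push_neg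
              exact ⟨g4, g5, fun h => k2 h.symm⟩),
            Finset.card_insert_of_notMem (by
              simp only [Finset.mem_insert, Finset.mem_singleton]
              push_neg
              exact ⟨g6, fun h => k3 h.symm⟩),
            Finset.card_insert_of_notMem (by
              simp only [Finset.mem_singleton]
              exact fun h => k4 h.symm),
            Finset.card_singleton]
        have hle : ({FWPPAux.blk A a, FWPPAux.blk A b, FWPPAux.blk A c,
            FWPPAux.blk A d, i} : Finset (Fin 4)).card ≤ 4 := by
          simpa using Finset.card_le_univ ({FWPPAux.blk A a, FWPPAux.blk A b, FWPPAux.blk A c,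
            FWPPAux.blk A d, i} : Finset (Fin 4))
        omega
      have pick : ∀ i : Fin 4, ∃ z, (z = a ∨ z = b ∨ z = c ∨ z = d) ∧ FWPPAux.blk A z = i := by
        intro i
        rcases hall i with h | h | h | h
        · exact ⟨a, Or.inl rfl, h.symm⟩
        · exact ⟨b, Or.inr (Or.inl rfl), h.symm⟩
        · exact ⟨c, Or.inr (Or.inr (Or.inl rfl)), h.symm⟩
        · exact ⟨d, Or.inr (Or.inr (Or.inr rfl)), h.symm⟩
      obtain ⟨z1, hz1or, hz1⟩ := pick 0
      obtain ⟨z2, hz2or, hz2⟩ := pick 1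
      obtain ⟨z3, hz3or, hz3⟩ := pick 2
      obtain ⟨z4, hz4or, hz4⟩ := pick 3
      have hzX : ∀ z, (z = a ∨ z = b ∨ z = c ∨ z = d) → z ∈ X := by
        rintro z (rfl | rfl | rfl | rfl) <;> assumption
      have hzmem : ∀ (z : α) (i : Fin 4), (z = a ∨ z = b ∨ z = c ∨ z = d) →
          FWPPAux.blk A z = i → z ∈ A i := by
        intro z i hzor hzi
        rw [← hzi]
        exact FWPPAux.mem_blk X A hcov hdisj (hzX z hzor)
      have hzsub : ({z1, z2, z3, z4} : Finset α) ⊆ ({a, b, c, d} : Finset α) := by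
        intro z hz
        simp only [Finset.mem_insert, Finset.mem_singleton] at hz ⊢
        rcases hz with rfl | rfl | rfl | rfl
        · exact hz1or
        · exact hz2or
        · exact hz3or
        · exact hz4or
      have hzd : z1 ≠ z2 ∧ z1 ≠ z3 ∧ z1 ≠ z4 ∧ z2 ≠ z3 ∧ z2 ≠ z4 ∧ z3 ≠ z4 := by
        refine ⟨?_, ?_, ?_, ?_, ?_, ?_⟩ <;> rintro rfl <;> simp_all
      have hzcard : ({z1, z2, z3, z4} : Finset α).card = 4 := by
        rw [Finset.card_insert_of_notMem (by
            simp only [Finset.mem_insert, Finset.mem_singleton]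
            push_neg
            exact ⟨hzd.1, hzd.2.1, hzd.2.2.1⟩),
          Finset.card_insert_of_notMem (by
            simp only [Finset.mem_insert, Finset.mem_singleton]
            push_neg
            exact ⟨hzd.2.2.2.1, hzd.2.2.2.2.1⟩),
          Finset.card_insert_of_notMem (by
            simp only [Finset.mem_singleton]
            exact hzd.2.2.2.2.2),
          Finset.card_singleton]
      have hzeq : ({z1, z2, z3, z4} : Finset α) = ({a, b, c, d} : Finset α) :=
        Finset.eq_of_subset_of_card_le hzsub (by omega)
      have hinQ : ({z1, z2, z3, z4} : Finset α) ∈ QSet S := by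
        rw [hzeq, habcd]
        exact ⟨hq4, Y, hYS, hqY⟩
      exact hcon z1 (hzmem z1 0 hz1or hz1) z2 (hzmem z2 1 hz2or hz2)
        z3 (hzmem z3 2 hz3or hz3) z4 (hzmem z4 3 hz4or hz4) hinQ
    obtain ⟨i, j, hv, hpat⟩ := FWPPAux.core X A hcov hdisj haX hbX hcX hdX
      hab hac had hbc hbd hcd hcol
    rcases hpat with hpat | hpat | hpat
    · exact iff_of_true
        (FWPPAux.tree_resolves_of_pattern X A side1 hne hsub hcov hdisj hfib1
          haX hbX hcX hdX hv (Or.inl hpat))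
        (FWPPAux.tree_resolves_of_pattern X A side2 hne hsub hcov hdisj hfib2
          haX hbX hcX hdX hv (Or.inl hpat))
    · exact iff_of_true
        (FWPPAux.tree_resolves_of_pattern X A side1 hne hsub hcov hdisj hfib1
          haX hbX hcX hdX hv (Or.inr hpat))
        (FWPPAux.tree_resolves_of_pattern X A side2 hne hsub hcov hdisj hfib2
          haX hbX hcX hdX hv (Or.inr hpat))
    · exact iff_of_false
        (FWPPAux.tree_not_resolves_of_pattern X A side1 hne hsub hcov hdisj hfib1
          haX hbX hcX hdX hv hpat)
        (FWPPAux.tree_not_resolves_of_pattern X A side2 hne hsub hcov hdisj hfib2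
          haX hbX hcX hdX hv hpat)
  -- hence the trees are label-isomorphic
  have hiso : PhyloTree.LabelIso T T' := hdec T T' hagree
  -- representatives of the four blocks
  obtain ⟨a1, ha1⟩ := hn1
  obtain ⟨a2, ha2⟩ := hn2
  obtain ⟨a3, ha3⟩ := hn3
  obtain ⟨a4, ha4⟩ := hn4
  have ha1' : a1 ∈ A 0 := ha1
  have ha2' : a2 ∈ A 1 := ha2
  have ha3' : a3 ∈ A 2 := ha3
  have ha4' : a4 ∈ A 3 := ha4
  have hb1 : FWPPAux.blk A a1 = 0 := FWPPAux.blk_eq_of_mem A hdisj ha1'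
  have hb2 : FWPPAux.blk A a2 = 1 := FWPPAux.blk_eq_of_mem A hdisj ha2'
  have hb3 : FWPPAux.blk A a3 = 2 := FWPPAux.blk_eq_of_mem A hdisj ha3'
  have hb4 : FWPPAux.blk A a4 = 3 := FWPPAux.blk_eq_of_mem A hdisj ha4'
  have ha1X : a1 ∈ X := hsub 0 ha1'
  have ha2X : a2 ∈ X := hsub 1 ha2'
  have ha3X : a3 ∈ X := hsub 2 ha3'
  have ha4X : a4 ∈ X := hsub 3 ha4'
  have hm1 : a1 ∈ A (FWPPAux.blk A a1) := FWPPAux.mem_blk X A hcov hdisj ha1X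
  have hm2 : a2 ∈ A (FWPPAux.blk A a2) := FWPPAux.mem_blk X A hcov hdisj ha2X
  have hm3 : a3 ∈ A (FWPPAux.blk A a3) := FWPPAux.mem_blk X A hcov hdisj ha3X
  have hm4 : a4 ∈ A (FWPPAux.blk A a4) := FWPPAux.mem_blk X A hcov hdisj ha4X
  -- T resolves a1 a2 | a3 a4 (central cut of T)
  have hTres : T.ResolvesAs a1 a2 a3 a4 := by
    show ∃ (p : (FWPPAux.Gr X A side1).Walk (FWPPAux.leafV X A a1) (FWPPAux.leafV X A a2))
        (q : (FWPPAux.Gr X A side1).Walk (FWPPAux.leafV X A a3) (FWPPAux.leafV X A a4)),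
        p.IsPath ∧ q.IsPath ∧ ∀ v ∈ p.support, v ∉ q.support
    have h3 : FWPPAux.below X A side1 (FWPPAux.vv X A) (FWPPAux.leafV X A a3) :=
      (FWPPAux.below_vv_iff X A side1 ha3X hm3).mpr (by rw [hb3]; rfl)
    have h4 : FWPPAux.below X A side1 (FWPPAux.vv X A) (FWPPAux.leafV X A a4) :=
      (FWPPAux.below_vv_iff X A side1 ha4X hm4).mpr (by rw [hb4]; rfl)
    have h1 : ¬ FWPPAux.below X A side1 (FWPPAux.vv X A) (FWPPAux.leafV X A a1) := by
      rw [FWPPAux.below_vv_iff X A side1 ha1X hm1, hb1]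
      simp [hside1]
    have h2 : ¬ FWPPAux.below X A side1 (FWPPAux.vv X A) (FWPPAux.leafV X A a2) := by
      rw [FWPPAux.below_vv_iff X A side1 ha2X hm2, hb2]
      simp [hside1]
    obtain ⟨q, p, hq, hp, hd'⟩ := FWPPAux.resolves_of_cut X A side1 h3 h4 h1 h2
    exact ⟨p, q, hp, hq, fun v hvp hvq => hd' v hvq hvp⟩
  -- T' does not resolve a1 a2 | a3 a4 (central cut of T' splits both pairs)
  have hT'res : ¬ T'.ResolvesAs a1 a2 a3 a4 := by
    intro hres
    have hres' : ∃ (p : (FWPPAux.Gr X A side2).Walk (FWPPAux.leafV X A a1)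
        (FWPPAux.leafV X A a2))
        (q : (FWPPAux.Gr X A side2).Walk (FWPPAux.leafV X A a3) (FWPPAux.leafV X A a4)),
        p.IsPath ∧ q.IsPath ∧ ∀ v ∈ p.support, v ∉ q.support := hres
    have h1 : ¬ FWPPAux.below X A side2 (FWPPAux.vv X A) (FWPPAux.leafV X A a1) := by
      rw [FWPPAux.below_vv_iff X A side2 ha1X hm1, hb1]
      simp [hside2]
    have h2 : FWPPAux.below X A side2 (FWPPAux.vv X A) (FWPPAux.leafV X A a2) :=
      (FWPPAux.below_vv_iff X A side2 ha2X hm2).mpr (by rw [hb2]; rfl)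
    have h3 : ¬ FWPPAux.below X A side2 (FWPPAux.vv X A) (FWPPAux.leafV X A a3) := by
      rw [FWPPAux.below_vv_iff X A side2 ha3X hm3, hb3]
      simp [hside2]
    have h4 : FWPPAux.below X A side2 (FWPPAux.vv X A) (FWPPAux.leafV X A a4) :=
      (FWPPAux.below_vv_iff X A side2 ha4X hm4).mpr (by rw [hb4]; rfl)
    exact FWPPAux.not_resolves_of_cut X A side2
      (fun hiff => h1 (hiff.mpr h2)) (fun hiff => h3 (hiff.mpr h4)) hres'
  exact hT'res (resolves_of_labelIso hiso ha1X ha2X ha3X ha4X hTres)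
end

section
/- Let X be a finite set with |X| ≥ 4 and let S be a collection of subsets of X. If S satisfies the four-way partition property for X, then S is phylogenetically decisive for X. -/
/-! ### Auxiliary development: unique paths in a phylogenetic tree -/

open SimpleGraph

namespace PhyloTree

variable {α : Type} {X : Finset α} (T : PhyloTree X)

/-- The unique path between two vertices. -/
noncomputable def pth (u v : T.V) : T.G.Walk u v :=
  letI : DecidableEq T.V := Classical.decEq _
  ((T.connected u v).some).bypass

lemma pth_isPath (u v : T.V) : (T.pth u v).IsPath := by
  letI : DecidableEq T.V := Classical.decEq _
  exact SimpleGraph.Walk.bypass_isPath _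

variable {T}

lemma eq_pth {u v : T.V} (p : T.G.Walk u v) (hp : p.IsPath) : p = T.pth u v := by
  have := T.acyclic.path_unique ⟨p, hp⟩ ⟨T.pth u v, T.pth_isPath u v⟩
  exact congrArg Subtype.val this

lemma pth_support_subset {u v : T.V} (w : T.G.Walk u v) :
    (T.pth u v).support ⊆ w.support := by
  letI : DecidableEq T.V := Classical.decEq _
  intro z hz
  rw [← eq_pth w.bypass w.bypass_isPath] at hz
  exact w.support_bypass_subset hz

lemma mem_pth_symm {u v z : T.V} (h : z ∈ (T.pth u v).support) :
    z ∈ (T.pth v u).support := by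
  rw [← eq_pth (T.pth u v).reverse ((T.pth_isPath u v).reverse)]
  rw [SimpleGraph.Walk.support_reverse, List.mem_reverse]
  exact h

end PhyloTree
namespace PhyloTree

variable {α : Type} {X : Finset α} {T : PhyloTree X}

lemma pth_start_mem (u v : T.V) : u ∈ (T.pth u v).support :=
  SimpleGraph.Walk.start_mem_support _

lemma pth_end_mem (u v : T.V) : v ∈ (T.pth u v).support :=
  SimpleGraph.Walk.end_mem_support _

lemma pth_self_support {u z : T.V} (h : z ∈ (T.pth u u).support) : z = u := by
  have : (SimpleGraph.Walk.nil : T.G.Walk u u) = T.pth u u :=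
    eq_pth _ (SimpleGraph.Walk.IsPath.nil)
  rw [← this] at h
  simpa using h

section TakeUntil
variable [DecidableEq T.V]

/-- take-until piece of the unique path is the unique path. -/
lemma takeUntil_eq_pth {u v w : T.V} (h : w ∈ (T.pth u v).support) :
    (T.pth u v).takeUntil w h = T.pth u w :=
  eq_pth _ ((T.pth_isPath u v).takeUntil h)

lemma dropUntil_eq_pth {u v w : T.V} (h : w ∈ (T.pth u v).support) :
    (T.pth u v).dropUntil w h = T.pth w v :=
  eq_pth _ ((T.pth_isPath u v).dropUntil h)

end TakeUntil

lemma pth_support_subset_left {u v w : T.V} (h : w ∈ (T.pth u v).support) :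
    (T.pth u w).support ⊆ (T.pth u v).support := by
  classical
  rw [← takeUntil_eq_pth h]; exact SimpleGraph.Walk.support_takeUntil_subset _ h

lemma pth_support_subset_right {u v w : T.V} (h : w ∈ (T.pth u v).support) :
    (T.pth w v).support ⊆ (T.pth u v).support := by
  classical
  rw [← dropUntil_eq_pth h]; exact SimpleGraph.Walk.support_dropUntil_subset _ h

/-- The unique path is contained in the union of paths through any midpoint. -/
lemma pth_mem_split {u v w z : T.V} (hz : z ∈ (T.pth u v).support) :
    z ∈ (T.pth u w).support ∨ z ∈ (T.pth w v).support := by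
  have hsub := pth_support_subset ((T.pth u w).append (T.pth w v))
  have := hsub hz
  rwa [SimpleGraph.Walk.mem_support_append_iff] at this

/-- Junction: the two halves of a path meet only at the midpoint. -/
lemma pth_junction {u v w z : T.V} (h : w ∈ (T.pth u v).support)
    (h1 : z ∈ (T.pth u w).support) (h2 : z ∈ (T.pth w v).support) : z = w := by
  classical
  have hspec := SimpleGraph.Walk.take_spec (T.pth u v) h
  have hnodup : ((T.pth u v).takeUntil w h |>.append ((T.pth u v).dropUntil w h)).support.Nodup := by
    rw [hspec]; exact (T.pth_isPath u v).support_nodup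
  rw [SimpleGraph.Walk.support_append] at hnodup
  rcases (List.nodup_append'.mp hnodup) with ⟨-, -, hdisj⟩
  rw [takeUntil_eq_pth h, dropUntil_eq_pth h] at hdisj
  by_contra hne
  have h2' : z ∈ (T.pth w v).support.tail := by
    have hcons := SimpleGraph.Walk.support_eq_cons (T.pth w v)
    rw [hcons, List.mem_cons] at h2
    tauto
  exact hdisj h1 h2'

/-- endpoint appears only as endpoint in half paths -/
lemma pth_end_not_mem_front {u v w : T.V} (h : w ∈ (T.pth u v).support)
    (hv : v ∈ (T.pth u w).support) : v = w :=
  pth_junction h hv (pth_end_mem w v)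

lemma pth_start_not_mem_back {u v w : T.V} (h : w ∈ (T.pth u v).support)
    (hu : u ∈ (T.pth w v).support) : u = w :=
  pth_junction h (pth_start_mem u w) hu

/-- Gluing two paths that meet only at the junction. -/
lemma pth_append {u v z : T.V}
    (h : ∀ t, t ∈ (T.pth u v).support → t ∈ (T.pth v z).support → t = v) :
    (T.pth u v).append (T.pth v z) = T.pth u z := by
  apply eq_pth
  apply SimpleGraph.Walk.IsPath.mk'
  rw [SimpleGraph.Walk.support_append]
  apply List.Nodup.append (T.pth_isPath u v).support_nodup
    ((T.pth_isPath v z).support_nodup.tail)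
  intro t ht ht'
  have htv : t = v := h t ht (List.mem_of_mem_tail ht')
  rw [htv] at ht'
  have hnd := (T.pth_isPath v z).support_nodup
  rw [SimpleGraph.Walk.support_eq_cons] at hnd
  exact (List.nodup_cons.mp hnd).1 ht'

lemma mem_pth_append {u v z s : T.V}
    (h : ∀ t, t ∈ (T.pth u v).support → t ∈ (T.pth v z).support → t = v)
    (hs : s ∈ (T.pth u v).support ∨ s ∈ (T.pth v z).support) :
    s ∈ (T.pth u z).support := by
  rw [← pth_append h, SimpleGraph.Walk.mem_support_append_iff]
  exact hs

end PhyloTree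
namespace PhyloTree

variable {α : Type} {X : Finset α} {T : PhyloTree X}

/-- `z1` and `z2` are connected avoiding `v`. -/
def Conn (T : PhyloTree X) (v z1 z2 : T.V) : Prop := v ∉ (T.pth z1 z2).support

lemma Conn.symm {v z1 z2 : T.V} (h : T.Conn v z1 z2) : T.Conn v z2 z1 :=
  fun hm => h (mem_pth_symm hm)

lemma Conn.trans {v a b c : T.V} (h1 : T.Conn v a b) (h2 : T.Conn v b c) :
    T.Conn v a c := by
  intro hm
  rcases pth_mem_split (w := b) hm with h | h
  · exact h1 h
  · exact h2 h

lemma conn_self {v z : T.V} (h : v ≠ z) : T.Conn v z z :=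
  fun hm => h (pth_self_support hm)

/-- The first step of the unique path from `u` to `z`. -/
noncomputable def dir (T : PhyloTree X) (u z : T.V) : T.V := (T.pth u z).getVert 1

lemma pth_cons {u z : T.V} (h : u ≠ z) :
    ∃ (w : T.V) (hadj : T.G.Adj u w), w = T.dir u z ∧
      T.pth u z = SimpleGraph.Walk.cons hadj (T.pth w z) := by
  obtain ⟨w, ha, q, hq⟩ := SimpleGraph.Walk.exists_eq_cons_of_ne h (T.pth u z)
  have hqp : q.IsPath := by
    have hp := T.pth_isPath u z; rw [hq] at hp; exact hp.of_cons
  refine ⟨w, ha, ?_, ?_⟩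
  · show w = (T.pth u z).getVert 1
    rw [hq]; exact (SimpleGraph.Walk.getVert_zero q).symm
  · rw [hq]; exact congrArg _ (eq_pth q hqp)

lemma dir_adj {u z : T.V} (h : u ≠ z) : T.G.Adj u (T.dir u z) := by
  obtain ⟨w, ha, hw, -⟩ := pth_cons h
  rwa [hw] at ha

lemma conn_dir {u z : T.V} (h : u ≠ z) : T.Conn u z (T.dir u z) := by
  obtain ⟨w, ha, hw, hcons⟩ := pth_cons h
  subst hw
  intro hm
  have hm' := mem_pth_symm hm
  have hp := T.pth_isPath u z
  rw [hcons] at hp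
  exact ((SimpleGraph.Walk.cons_isPath_iff _ _).mp hp).2 hm'

lemma mem_dir_pth {u z : T.V} (h : u ≠ z) : T.dir u z ∈ (T.pth u z).support := by
  obtain ⟨w, ha, hw, hcons⟩ := pth_cons h
  subst hw
  rw [hcons]
  simp [SimpleGraph.Walk.support_cons]

lemma dir_eq_of_adj {u w : T.V} (h : T.G.Adj u w) : T.dir u w = w := by
  have : SimpleGraph.Walk.cons h SimpleGraph.Walk.nil = T.pth u w := by
    apply eq_pth
    rw [SimpleGraph.Walk.cons_isPath_iff]
    exact ⟨SimpleGraph.Walk.IsPath.nil, by simp [h.ne]⟩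
  show (T.pth u w).getVert 1 = w
  rw [← this]; exact SimpleGraph.Walk.getVert_zero _

lemma not_conn_of_adj {u w1 w2 : T.V} (h1 : T.G.Adj u w1) (h2 : T.G.Adj u w2)
    (hne : w1 ≠ w2) : ¬ T.Conn u w1 w2 := by
  intro hc
  have hpath : (SimpleGraph.Walk.cons h1.symm (SimpleGraph.Walk.cons h2 SimpleGraph.Walk.nil) :
      T.G.Walk w1 w2).IsPath := by
    rw [SimpleGraph.Walk.cons_isPath_iff, SimpleGraph.Walk.cons_isPath_iff]
    refine ⟨⟨SimpleGraph.Walk.IsPath.nil, by simp [h2.ne]⟩, ?_⟩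
    simp [h1.ne', hne]
  have := eq_pth _ hpath
  apply hc
  rw [← this]
  simp [SimpleGraph.Walk.support_cons]

lemma conn_iff_dir {u z1 z2 : T.V} (h1 : z1 ≠ u) (h2 : z2 ≠ u) :
    T.Conn u z1 z2 ↔ T.dir u z1 = T.dir u z2 := by
  constructor
  · intro hc
    by_contra hne
    exact not_conn_of_adj (dir_adj (Ne.symm h1)) (dir_adj (Ne.symm h2)) hne
      ((((conn_dir (Ne.symm h1)).symm.trans hc).trans (conn_dir (Ne.symm h2))))
  · intro heq
    have c1 : T.Conn u z1 (T.dir u z2) := by rw [← heq]; exact conn_dir (Ne.symm h1)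
    exact c1.trans (conn_dir (Ne.symm h2)).symm

end PhyloTree
namespace PhyloTree

variable {α : Type} {X : Finset α} {T : PhyloTree X}

/-- vertices not labeled by `X` -/
def Internal (T : PhyloTree X) (v : T.V) : Prop := ∀ x ∈ X, T.leaf x ≠ v

lemma two_nbrs_of_interior {u v z : T.V} (hz : z ∈ (T.pth u v).support)
    (hzu : z ≠ u) (hzv : z ≠ v) :
    ∃ w1 w2 : T.V, w1 ≠ w2 ∧ T.G.Adj z w1 ∧ T.G.Adj z w2 := by
  refine ⟨T.dir z u, T.dir z v, ?_, dir_adj hzu, dir_adj hzv⟩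
  intro heq
  have hcon : T.Conn z u v :=
    (conn_iff_dir (Ne.symm hzu) (Ne.symm hzv)).mpr heq
  exact hcon hz

lemma leaf_mem_pth {x : α} (hx : x ∈ X) {u v : T.V}
    (h : T.leaf x ∈ (T.pth u v).support) : T.leaf x = u ∨ T.leaf x = v := by
  by_contra hne
  push_neg at hne
  obtain ⟨w1, w2, hw, h1, h2⟩ := two_nbrs_of_interior h hne.1 hne.2
  have hcard := T.leaf_degree x hx
  rw [Set.ncard_eq_one] at hcard
  obtain ⟨a, ha⟩ := hcard
  have m1 : w1 ∈ T.G.neighborSet (T.leaf x) := h1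
  have m2 : w2 ∈ T.G.neighborSet (T.leaf x) := h2
  rw [ha] at m1 m2
  simp only [Set.mem_singleton_iff] at m1 m2
  exact hw (m1.trans m2.symm)

lemma internal_nbrs {v : T.V} (hv : T.Internal v) :
    ∃ n1 n2 n3 : T.V, n1 ≠ n2 ∧ n1 ≠ n3 ∧ n2 ≠ n3 ∧
      T.G.neighborSet v = {n1, n2, n3} := by
  have h3 := T.internal_degree v hv
  rw [Set.ncard_eq_three] at h3
  exact h3

lemma labeled_or_internal (v : T.V) : (∃ x ∈ X, T.leaf x = v) ∨ T.Internal v := by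
  by_cases h : ∃ x ∈ X, T.leaf x = v
  · exact Or.inl h
  · right; intro x hx heq; exact h ⟨x, hx, heq⟩

/-- Beyond every vertex `u ≠ v` (away from `v`) there is a labeled leaf. -/
lemma exists_leaf_beyond {v : T.V} :
    ∀ u : T.V, u ≠ v → ∃ x ∈ X, u ∈ (T.pth (T.leaf x) v).support := by
  haveI := T.fintypeV
  suffices H : ∀ n : ℕ, ∀ u : T.V, u ≠ v →
      ({z : T.V | u ∈ (T.pth z v).support}).ncard ≤ n →
      ∃ x ∈ X, u ∈ (T.pth (T.leaf x) v).support by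
    intro u hu
    exact H _ u hu le_rfl
  intro n
  induction n with
  | zero =>
    intro u hu hle
    exfalso
    have hne : ({z : T.V | u ∈ (T.pth z v).support}).Nonempty :=
      ⟨u, pth_start_mem u v⟩
    have hpos := (Set.ncard_pos (Set.toFinite _)).mpr hne
    omega
  | succ n ih =>
    intro u hu hle
    rcases labeled_or_internal u with ⟨x, hx, hxu⟩ | hint
    · exact ⟨x, hx, by rw [hxu]; exact pth_start_mem u v⟩
    · obtain ⟨n1, n2, n3, h12, h13, h23, hset⟩ := internal_nbrs hint
      have hs : T.dir u v ∈ T.G.neighborSet u := dir_adj hu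
      -- pick a neighbor w ≠ dir u v
      obtain ⟨w, hwadj, hwne⟩ : ∃ w : T.V, T.G.Adj u w ∧ w ≠ T.dir u v := by
        by_cases h1 : n1 = T.dir u v
        · refine ⟨n2, ?_, fun h => h12 (h1.trans h.symm)⟩
          have : n2 ∈ T.G.neighborSet u := by rw [hset]; simp
          exact this
        · refine ⟨n1, ?_, h1⟩
          have : n1 ∈ T.G.neighborSet u := by rw [hset]; simp
          exact this
      have hwu : w ≠ u := hwadj.ne'
      -- w is not on the path from u to v
      have hwn : w ∉ (T.pth u v).support := by
        intro hmem
        have hnoback : u ∉ (T.pth w v).support := by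
          intro hu'
          exact hwu.symm (pth_start_not_mem_back hmem hu')
        have hconn : T.Conn u w v := hnoback
        rw [conn_iff_dir hwu (fun h => hu h.symm)] at hconn
        rw [dir_eq_of_adj hwadj] at hconn
        exact hwne hconn
      -- the path from w to v starts with the edge w-u
      have hpath : (SimpleGraph.Walk.cons hwadj.symm (T.pth u v)).IsPath := by
        rw [SimpleGraph.Walk.cons_isPath_iff]
        exact ⟨T.pth_isPath u v, hwn⟩
      have hcons : SimpleGraph.Walk.cons hwadj.symm (T.pth u v) = T.pth w v :=
        eq_pth _ hpath
      have humem : u ∈ (T.pth w v).support := by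
        rw [← hcons]; simp [SimpleGraph.Walk.support_cons]
      have hwv : w ≠ v := by
        intro h; exact hwn (h ▸ pth_end_mem u v)
      -- measure decreases
      have hsub : {z : T.V | w ∈ (T.pth z v).support} ⊂
          {z : T.V | u ∈ (T.pth z v).support} := by
        constructor
        · intro z hz
          exact pth_support_subset_right hz humem
        · intro hsup
          have : u ∈ {z : T.V | w ∈ (T.pth z v).support} → False := by
            intro hmem; exact hwn hmem
          exact this (hsup (pth_start_mem u v))
      have hlt := Set.ncard_lt_ncard hsub (Set.toFinite _)
      obtain ⟨x, hx, hmem⟩ := ih w hwv (by omega)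
      exact ⟨x, hx, pth_support_subset_right hmem humem⟩

/-- Median existence. -/
lemma med_exists (x y z : T.V) :
    ∃ m : T.V, m ∈ (T.pth x y).support ∧ m ∈ (T.pth x z).support ∧
      m ∈ (T.pth y z).support := by
  suffices H : ∀ n : ℕ, ∀ z : T.V, (T.pth z x).length ≤ n →
      ∃ m : T.V, m ∈ (T.pth x y).support ∧ m ∈ (T.pth z x).support ∧
        m ∈ (T.pth z y).support by
    obtain ⟨m, h1, h2, h3⟩ := H _ z le_rfl
    exact ⟨m, h1, mem_pth_symm h2, mem_pth_symm h3⟩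
  intro n
  induction n with
  | zero =>
    intro z hlen
    have hzx : z = x := (T.pth z x).eq_of_length_eq_zero (Nat.le_zero.mp hlen)
    subst hzx
    exact ⟨z, pth_start_mem _ _, pth_start_mem _ _, pth_start_mem _ _⟩
  | succ n ih =>
    intro z hlen
    by_cases hz : z ∈ (T.pth x y).support
    · exact ⟨z, hz, pth_start_mem _ _, pth_start_mem _ _⟩
    · have hzx : z ≠ x := fun h => hz (h ▸ pth_start_mem x y)
      have hzy : z ≠ y := fun h => hz (h ▸ pth_end_mem x y)
      obtain ⟨w, ha, hw, hcons⟩ := pth_cons hzx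
      have hdir : T.dir z x = T.dir z y :=
        (conn_iff_dir (Ne.symm hzx) (Ne.symm hzy)).mp hz
      obtain ⟨w', ha', hw', hcons'⟩ := pth_cons hzy
      have hww : w' = w := by rw [hw', hw, hdir]
      have hlen' : (T.pth w x).length ≤ n := by
        have : (T.pth z x).length = (T.pth w x).length + 1 := by
          rw [hcons]; simp [SimpleGraph.Walk.length_cons]
        omega
      obtain ⟨m, h1, h2, h3⟩ := ih w hlen'
      refine ⟨m, h1, ?_, ?_⟩
      · rw [hcons]; simp [SimpleGraph.Walk.support_cons]; right; exact h2
      · rw [hcons']; simp [SimpleGraph.Walk.support_cons]; right; rw [hww]; exact h3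

/-- The median of three vertices. -/
noncomputable def med (T : PhyloTree X) (x y z : T.V) : T.V :=
  Classical.choose (med_exists (T := T) x y z)

lemma med_mem₁ (x y z : T.V) : T.med x y z ∈ (T.pth x y).support :=
  (Classical.choose_spec (med_exists (T := T) x y z)).1

lemma med_mem₂ (x y z : T.V) : T.med x y z ∈ (T.pth x z).support :=
  (Classical.choose_spec (med_exists (T := T) x y z)).2.1

lemma med_mem₃ (x y z : T.V) : T.med x y z ∈ (T.pth y z).support :=
  (Classical.choose_spec (med_exists (T := T) x y z)).2.2

end PhyloTree
namespace PhyloTree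

variable {α : Type} {X : Finset α} {T : PhyloTree X}

/-- If `w` is on the `u`–`v` path and `t` beyond `w`, then `w` is on the `u`–`t` path. -/
lemma mem_left_of_mem_right {u v w t : T.V} (hw : w ∈ (T.pth u v).support)
    (ht : t ∈ (T.pth w v).support) : w ∈ (T.pth u t).support := by
  have hsub : (T.pth w t).support ⊆ (T.pth w v).support := pth_support_subset_left ht
  have hjun : ∀ s, s ∈ (T.pth u w).support → s ∈ (T.pth w t).support → s = w :=
    fun s h1 h2 => pth_junction hw h1 (hsub h2)
  exact mem_pth_append hjun (Or.inl (pth_end_mem u w))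

lemma leaf_ne_leaf {a b : α} (ha : a ∈ X) (hb : b ∈ X) (hab : a ≠ b) :
    T.leaf a ≠ T.leaf b := fun h => hab (T.leaf_inj a ha b hb h)

/-- A vertex lying on all three pairwise paths between distinct leaves is internal. -/
lemma internal_of_three {v : T.V} {a b c : α} (ha : a ∈ X) (hb : b ∈ X) (hc : c ∈ X)
    (hab : a ≠ b) (hac : a ≠ c) (hbc : b ≠ c)
    (h1 : v ∈ (T.pth (T.leaf a) (T.leaf b)).support)
    (h2 : v ∈ (T.pth (T.leaf a) (T.leaf c)).support)
    (h3 : v ∈ (T.pth (T.leaf b) (T.leaf c)).support) : T.Internal v := by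
  intro x hx heq
  rcases leaf_mem_pth hx (heq ▸ h1) with h | h
  · have hxa : x = a := T.leaf_inj x hx a ha h
    subst hxa
    rcases leaf_mem_pth hx (heq ▸ h3) with h' | h'
    · exact hab (T.leaf_inj x hx b hb h')
    · exact hac (T.leaf_inj x hx c hc h')
  · have hxb : x = b := T.leaf_inj x hx b hb h
    subst hxb
    rcases leaf_mem_pth hx (heq ▸ h2) with h' | h'
    · exact hab (T.leaf_inj x hx a ha h').symm
    · exact hbc (T.leaf_inj x hx c hc h')

/-- Pigeonhole: at an internal (degree-3) vertex, among any four vertices distinct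
from it, two are connected avoiding it. -/
lemma conn_of_internal_four {v : T.V} (hv : T.Internal v) {p q r s : T.V}
    (hp : p ≠ v) (hq : q ≠ v) (hr : r ≠ v) (hs : s ≠ v) :
    T.Conn v p q ∨ T.Conn v p r ∨ T.Conn v p s ∨ T.Conn v q r ∨
      T.Conn v q s ∨ T.Conn v r s := by
  by_contra hcon
  push_neg at hcon
  obtain ⟨c1, c2, c3, c4, c5, c6⟩ := hcon
  obtain ⟨n1, n2, n3, h12, h13, h23, hset⟩ := internal_nbrs hv
  have hmem : ∀ w : T.V, v ≠ w → (T.dir v w = n1 ∨ T.dir v w = n2 ∨ T.dir v w = n3) := by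
    intro w hw
    have : T.dir v w ∈ T.G.neighborSet v := dir_adj hw
    rw [hset] at this
    simpa using this
  have d1 := hmem p (Ne.symm hp)
  have d2 := hmem q (Ne.symm hq)
  have d3 := hmem r (Ne.symm hr)
  have d4 := hmem s (Ne.symm hs)
  have e1 : T.dir v p ≠ T.dir v q := fun h => c1 ((conn_iff_dir hp hq).mpr h)
  have e2 : T.dir v p ≠ T.dir v r := fun h => c2 ((conn_iff_dir hp hr).mpr h)
  have e3 : T.dir v p ≠ T.dir v s := fun h => c3 ((conn_iff_dir hp hs).mpr h)
  have e4 : T.dir v q ≠ T.dir v r := fun h => c4 ((conn_iff_dir hq hr).mpr h)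
  have e5 : T.dir v q ≠ T.dir v s := fun h => c5 ((conn_iff_dir hq hs).mpr h)
  have e6 : T.dir v r ≠ T.dir v s := fun h => c6 ((conn_iff_dir hr hs).mpr h)
  rcases d1 with h|h|h <;> rcases d2 with h'|h'|h' <;> rcases d3 with h''|h''|h'' <;>
    rcases d4 with h'''|h'''|h''' <;> simp_all

/-- Every label falls in the class of one of `a`, `b`, `c` at such a vertex. -/
lemma conn_one_of_three {v : T.V} {a b c : α} (ha : a ∈ X) (hb : b ∈ X) (hc : c ∈ X)
    (hab : a ≠ b) (hac : a ≠ c) (hbc : b ≠ c)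
    (h1 : v ∈ (T.pth (T.leaf a) (T.leaf b)).support)
    (h2 : v ∈ (T.pth (T.leaf a) (T.leaf c)).support)
    (h3 : v ∈ (T.pth (T.leaf b) (T.leaf c)).support)
    {p : α} (hp : p ∈ X) :
    T.Conn v (T.leaf p) (T.leaf a) ∨ T.Conn v (T.leaf p) (T.leaf b) ∨
      T.Conn v (T.leaf p) (T.leaf c) := by
  have hint : T.Internal v := internal_of_three ha hb hc hab hac hbc h1 h2 h3
  have hne : ∀ x ∈ X, T.leaf x ≠ v := hint
  rcases conn_of_internal_four hint (hne p hp) (hne a ha) (hne b hb) (hne c hc) with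
    h|h|h|h|h|h
  · exact Or.inl h
  · exact Or.inr (Or.inl h)
  · exact Or.inr (Or.inr h)
  · exact absurd h1 h
  · exact absurd h2 h
  · exact absurd h3 h

/-- Side of a vertex vs. quartet resolution. -/
lemma conn_iff_res {v : T.V} {a b c p : α} (ha : a ∈ X) (hb : b ∈ X) (hc : c ∈ X)
    (hp : p ∈ X) (hab : a ≠ b) (hac : a ≠ c) (hbc : b ≠ c)
    (hpa : p ≠ a) (hpb : p ≠ b) (hpc : p ≠ c)
    (h1 : v ∈ (T.pth (T.leaf a) (T.leaf b)).support)
    (h2 : v ∈ (T.pth (T.leaf a) (T.leaf c)).support)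
    (h3 : v ∈ (T.pth (T.leaf b) (T.leaf c)).support) :
    T.Conn v (T.leaf p) (T.leaf a) ↔ T.ResolvesAs p a b c := by
  constructor
  · intro hconn
    refine ⟨T.pth _ _, T.pth _ _, T.pth_isPath _ _, T.pth_isPath _ _, ?_⟩
    intro z hz1 hz2
    have hzv : z ≠ v := fun h => hconn (h ▸ hz1)
    have hcz : T.Conn v z (T.leaf a) := fun hm => hconn (pth_support_subset_right hz1 hm)
    rcases pth_mem_split (w := v) hz2 with hz | hz
    · -- z between leaf b and v
      have hcb : T.Conn v (T.leaf b) z := by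
        intro hm
        exact hzv (pth_end_not_mem_front hz hm).symm
      have : T.Conn v (T.leaf b) (T.leaf a) := hcb.trans hcz
      exact this (mem_pth_symm h1)
    · -- z between v and leaf c
      have hcc : T.Conn v z (T.leaf c) := by
        intro hm
        exact hzv (pth_start_not_mem_back hz hm).symm
      have : T.Conn v (T.leaf a) (T.leaf c) := (hcz.symm).trans hcc
      exact this h2
  · rintro ⟨P, Q, hP, hQ, hdisj⟩
    rw [eq_pth P hP, eq_pth Q hQ] at hdisj
    intro hv
    exact hdisj v hv h3

end PhyloTree
namespace PhyloTree

variable {α : Type} {X : Finset α} {T : PhyloTree X}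

lemma res_iff {a b c d : α} :
    T.ResolvesAs a b c d ↔
      ∀ z, z ∈ (T.pth (T.leaf a) (T.leaf b)).support →
        z ∉ (T.pth (T.leaf c) (T.leaf d)).support := by
  constructor
  · rintro ⟨P, Q, hP, hQ, hdisj⟩
    rw [eq_pth P hP, eq_pth Q hQ] at hdisj
    exact hdisj
  · intro h
    exact ⟨T.pth _ _, T.pth _ _, T.pth_isPath _ _, T.pth_isPath _ _, h⟩

lemma res_comm {a b c d : α} (h : T.ResolvesAs a b c d) : T.ResolvesAs c d a b := by
  rw [res_iff] at h ⊢
  intro z hz1 hz2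
  exact h z hz2 hz1

lemma res_swap_left {a b c d : α} (h : T.ResolvesAs a b c d) : T.ResolvesAs b a c d := by
  rw [res_iff] at h ⊢
  intro z hz1 hz2
  exact h z (mem_pth_symm hz1) hz2

lemma res_swap_right {a b c d : α} (h : T.ResolvesAs a b c d) : T.ResolvesAs a b d c := by
  rw [res_iff] at h ⊢
  intro z hz1 hz2
  exact h z hz1 (mem_pth_symm hz2)

/-- A tree cannot resolve the same quartet two different ways. -/
lemma res_excl {a b c d : α} (h1 : T.ResolvesAs a b c d) (h2 : T.ResolvesAs a c b d) :
    False := by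
  rw [res_iff] at h1 h2
  set la := T.leaf a
  set lb := T.leaf b
  set lc := T.leaf c
  set ld := T.leaf d
  set m := T.med la lb lc with hm
  set n := T.med lb lc ld with hn
  have hm1 : m ∈ (T.pth la lb).support := med_mem₁ _ _ _
  have hm2 : m ∈ (T.pth la lc).support := med_mem₂ _ _ _
  have hm3 : m ∈ (T.pth lb lc).support := med_mem₃ _ _ _
  have hn1 : n ∈ (T.pth lb lc).support := med_mem₁ _ _ _
  have hn2 : n ∈ (T.pth lb ld).support := med_mem₂ _ _ _
  have hn3 : n ∈ (T.pth lc ld).support := med_mem₃ _ _ _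
  rcases pth_mem_split (w := n) hm3 with hsplit | hsplit
  · -- m between b and n, so m on the b–d path: contradicts h2 via m on a–c path
    have : m ∈ (T.pth lb ld).support := pth_support_subset_left hn2 hsplit
    exact h2 m hm2 this
  · -- m between n and c, so m on the c–d path: contradicts h1 via m on a–b path
    have hmc : m ∈ (T.pth lc n).support := mem_pth_symm hsplit
    have : m ∈ (T.pth lc ld).support := pth_support_subset_left hn3 hmc
    exact h1 m hm1 this

/-- Helper for totality: the configuration a .. m .. n .. b with c at m, d at n. -/
lemma res_of_config {a b c d : α} {m n : T.V}
    (hm1 : m ∈ (T.pth (T.leaf a) (T.leaf b)).support)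
    (hm2 : m ∈ (T.pth (T.leaf a) (T.leaf c)).support)
    (hm3 : m ∈ (T.pth (T.leaf b) (T.leaf c)).support)
    (hn1 : n ∈ (T.pth (T.leaf a) (T.leaf b)).support)
    (hn2 : n ∈ (T.pth (T.leaf a) (T.leaf d)).support)
    (hn3 : n ∈ (T.pth (T.leaf b) (T.leaf d)).support)
    (hmn : m ≠ n)
    (horder : n ∈ (T.pth m (T.leaf b)).support) :
    T.ResolvesAs a c b d := by
  set la := T.leaf a
  set lb := T.leaf b
  set lc := T.leaf c
  set ld := T.leaf d
  -- m is on the path from a to n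
  have hman : m ∈ (T.pth la n).support := by
    rcases pth_mem_split (w := n) hm1 with h | h
    · exact h
    · exact absurd (pth_start_not_mem_back horder h) hmn
  -- the branch at m towards c meets the a–b path only in m
  have hbranch : ∀ t, t ∈ (T.pth m lc).support → t ∈ (T.pth la lb).support → t = m := by
    intro t ht hab
    rcases pth_mem_split (w := m) hab with h | h
    · exact pth_junction hm2 h ht
    · exact pth_junction hm3 (mem_pth_symm h) ht
  rw [res_iff]
  intro z hzac hzbd
  rcases pth_mem_split (w := m) hzac with hz1 | hz1
  · rcases pth_mem_split (w := n) hzbd with hz2 | hz2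
    · -- (A) z ∈ path(a,m) ∩ path(b,n)
      have hzbm : z ∈ (T.pth lb m).support := by
        have hnm : n ∈ (T.pth lb m).support := mem_pth_symm horder
        exact pth_support_subset_left hnm hz2
      have hzm : z = m := pth_junction hm1 hz1 (mem_pth_symm hzbm)
      subst hzm
      exact hmn (pth_end_not_mem_front (mem_pth_symm horder) hz2)
    · -- (B) z ∈ path(a,m) ∩ path(n,d)
      have hzan : z ∈ (T.pth la n).support := pth_support_subset_left hman hz1
      have hzn : z = n := pth_junction hn2 hzan hz2
      subst hzn
      exact hmn (pth_end_not_mem_front hman hz1).symm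
  · rcases pth_mem_split (w := n) hzbd with hz2 | hz2
    · -- (C) z ∈ path(m,c) ∩ path(b,n)
      have hzab : z ∈ (T.pth la lb).support := by
        have : (T.pth lb n).support ⊆ (T.pth lb la).support :=
          pth_support_subset_left (mem_pth_symm hn1)
        exact mem_pth_symm (this hz2)
      have hzm : z = m := hbranch z hz1 hzab
      rw [hzm] at hz2
      exact hmn (pth_end_not_mem_front (mem_pth_symm horder) hz2)
    · -- (D) z ∈ path(m,c) ∩ path(n,d)
      have hzac' : z ∈ (T.pth la lc).support := pth_support_subset_right hm2 hz1
      have hzad : z ∈ (T.pth la ld).support := pth_support_subset_right hn2 hz2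
      have hmz : m ∈ (T.pth la z).support := mem_left_of_mem_right hm2 hz1
      have hnz : n ∈ (T.pth la z).support := mem_left_of_mem_right hn2 hz2
      have hnmt : n ∈ (T.pth m z).support := by
        rcases pth_mem_split (w := m) hnz with h | h
        · exact absurd (pth_end_not_mem_front h hman) hmn
        · exact h
      have hnmc : n ∈ (T.pth m lc).support := pth_support_subset_left hz1 hnmt
      exact hmn (hbranch n hnmc hn1).symm

/-- Totality: any four distinct leaves are resolved in some way. -/
lemma res_total {a b c d : α} (ha : a ∈ X) (hb : b ∈ X) (hc : c ∈ X) (hd : d ∈ X)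
    (hab : a ≠ b) (hac : a ≠ c) (had : a ≠ d) (hbc : b ≠ c) (hbd : b ≠ d)
    (hcd : c ≠ d) :
    T.ResolvesAs a b c d ∨ T.ResolvesAs a c b d ∨ T.ResolvesAs a d b c := by
  set la := T.leaf a
  set lb := T.leaf b
  set lc := T.leaf c
  set ld := T.leaf d
  obtain ⟨m, hm1, hm2, hm3⟩ := med_exists (T := T) la lb lc
  obtain ⟨n, hn1, hn2, hn3⟩ := med_exists (T := T) la lb ld
  by_cases hmn : m = n
  · -- m = n : resolution ab|cd
    left
    subst hmn
    -- m is not on the c–d path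
    have hmcd : m ∉ (T.pth lc ld).support := by
      intro hmem
      have hint : T.Internal m := internal_of_three ha hb hc hab hac hbc hm1 hm2 hm3
      have hne : ∀ x ∈ X, T.leaf x ≠ m := hint
      rcases conn_of_internal_four hint (hne a ha) (hne b hb) (hne c hc) (hne d hd) with
        h|h|h|h|h|h
      · exact h hm1
      · exact h hm2
      · exact h hn2
      · exact h hm3
      · exact h hn3
      · exact h hmem
    rw [res_iff]
    intro z hzab hzcd
    rcases pth_mem_split (w := m) hzcd with hz | hz
    · -- z between c and m
      rcases pth_mem_split (w := m) hzab with hz' | hz'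
      · have := pth_junction hm2 hz' (mem_pth_symm hz)
        subst this
        exact hmcd hzcd
      · have := pth_junction hm3 (mem_pth_symm hz') (mem_pth_symm hz)
        subst this
        exact hmcd hzcd
    · -- z between m and d
      rcases pth_mem_split (w := m) hzab with hz' | hz'
      · have := pth_junction hn2 hz' hz
        subst this
        exact hmcd hzcd
      · have := pth_junction hn3 (mem_pth_symm hz') hz
        subst this
        exact hmcd hzcd
  · -- m ≠ n
    rcases pth_mem_split (w := m) hn1 with hord | hord
    · -- order a .. n .. m .. b : apply config with a, b swapped
      right; right
      have hres : T.ResolvesAs b c a d :=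
        res_of_config (mem_pth_symm hm1) hm3 hm2 (mem_pth_symm hn1) hn3 hn2
          hmn (mem_pth_symm hord)
      exact res_comm hres
    · -- order a .. m .. n .. b
      right; left
      exact res_of_config hm1 hm2 hm3 hn1 hn2 hn3 hmn hord

end PhyloTree
namespace PhyloTree

variable {α : Type} {X : Finset α} {T : PhyloTree X}

/-- From a resolution `ab|cd`, extract a "split". -/
lemma res_split {a b c d : α} (hres : T.ResolvesAs a b c d) :
    ∃ u w : T.V,
      u ∈ (T.pth (T.leaf a) w).support ∧
      u ∈ (T.pth (T.leaf b) w).support ∧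
      u ∉ (T.pth (T.leaf c) w).support ∧
      u ∉ (T.pth (T.leaf d) w).support ∧
      (∀ p1 p2 p3 p4 : α,
        u ∈ (T.pth (T.leaf p1) w).support →
        u ∈ (T.pth (T.leaf p2) w).support →
        u ∉ (T.pth (T.leaf p3) w).support →
        u ∉ (T.pth (T.leaf p4) w).support →
        T.ResolvesAs p1 p2 p3 p4) := by
  rw [res_iff] at hres
  set la := T.leaf a
  set lb := T.leaf b
  set lc := T.leaf c
  set ld := T.leaf d
  obtain ⟨u, hu1, hu2, hu3⟩ := med_exists (T := T) la lb lc
  obtain ⟨w, hw1, hw2, hw3⟩ := med_exists (T := T) la lc ld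
  have hucd : u ∉ (T.pth lc ld).support := hres u hu1
  have hwab : w ∉ (T.pth la lb).support := fun hmem => hres w hmem hw3
  have hPa : u ∈ (T.pth la w).support := by
    rcases pth_mem_split (w := w) hu2 with h | h
    · exact h
    · exact absurd (pth_support_subset_left hw3 (mem_pth_symm h)) hucd
  have hwuc : w ∈ (T.pth u lc).support := by
    rcases pth_mem_split (w := u) hw1 with h | h
    · exact absurd (pth_support_subset_left hu1 h) hwab
    · exact h
  have hwbc : w ∈ (T.pth lb lc).support := pth_support_subset_right hu3 hwuc
  have hPb : u ∈ (T.pth lb w).support := by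
    rcases pth_mem_split (w := w) hu3 with h | h
    · exact h
    · exact absurd (pth_support_subset_left hw3 (mem_pth_symm h)) hucd
  have hPc : u ∉ (T.pth lc w).support := by
    intro hmem
    exact hucd (pth_support_subset_left hw3 hmem)
  have hPd : u ∉ (T.pth ld w).support := by
    intro hmem
    have : u ∈ (T.pth ld lc).support :=
      pth_support_subset_left (mem_pth_symm hw3) hmem
    exact hucd (mem_pth_symm this)
  refine ⟨u, w, hPa, hPb, hPc, hPd, ?_⟩
  intro p1 p2 p3 p4 h1 h2 h3 h4
  rw [res_iff]
  intro z hz12 hz34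
  have hc3 : T.Conn u (T.leaf p3) w := h3
  have hc4 : T.Conn u (T.leaf p4) w := h4
  have hc34 : T.Conn u (T.leaf p3) (T.leaf p4) := hc3.trans hc4.symm
  have hz3 : T.Conn u (T.leaf p3) z :=
    fun hm => hc34 (pth_support_subset_left hz34 hm)
  have hcz : T.Conn u z w := hz3.symm.trans hc3
  rcases pth_mem_split (w := u) hz12 with hz | hz
  · have : u ∈ (T.pth w z).support :=
      mem_left_of_mem_right (mem_pth_symm h1) (mem_pth_symm hz)
    exact hcz (mem_pth_symm this)
  · have : u ∈ (T.pth w z).support :=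
      mem_left_of_mem_right (mem_pth_symm h2) hz
    exact hcz (mem_pth_symm this)

end PhyloTree
namespace PhyloTree

variable {α : Type} [DecidableEq α] {X : Finset α} {T T' : PhyloTree X}

/-- The core four-way-partition contradiction. -/
lemma step_contra {S : Set (Finset α)}
    (hfour : FourWayPartitionProperty X S)
    (hQ : ∀ q ∈ QSet S, PhyloTree.ResolveIdentically T T' q)
    {a b c d : α} (ha : a ∈ X) (hb : b ∈ X) (hc : c ∈ X) (hd : d ∈ X)
    (h1 : T.ResolvesAs a b c d) (h2 : T'.ResolvesAs a c b d) : False := by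
  classical
  obtain ⟨u, w, hPa, hPb, hPc, hPd, hPsplit⟩ := res_split h1
  obtain ⟨u', w', hRa, hRc, hRb, hRd, hRsplit⟩ := res_split h2
  set P : α → Prop := fun p => u ∈ (T.pth (T.leaf p) w).support with hP
  set R : α → Prop := fun p => u' ∈ (T'.pth (T'.leaf p) w').support with hR
  set A1 : Finset α := X.filter (fun p => P p ∧ R p) with hA1
  set A2 : Finset α := X.filter (fun p => P p ∧ ¬ R p) with hA2
  set A3 : Finset α := X.filter (fun p => ¬ P p ∧ R p) with hA3
  set A4 : Finset α := X.filter (fun p => ¬ P p ∧ ¬ R p) with hA4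
  have hmem1 : a ∈ A1 := by simp [hA1, Finset.mem_filter, ha, hP, hR, hPa, hRa]
  have hmem2 : b ∈ A2 := by simp [hA2, Finset.mem_filter, hb, hP, hR, hPb, hRb]
  have hmem3 : c ∈ A3 := by simp [hA3, Finset.mem_filter, hc, hP, hR, hPc, hRc]
  have hmem4 : d ∈ A4 := by simp [hA4, Finset.mem_filter, hd, hP, hR, hPd, hRd]
  have hd : ∀ x : α, x ∈ X → True := fun _ _ => trivial
  have hd12 : Disjoint A1 A2 := by
    rw [Finset.disjoint_left]; intro x hx1 hx2
    simp only [hA1, hA2, Finset.mem_filter] at hx1 hx2; tauto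
  have hd13 : Disjoint A1 A3 := by
    rw [Finset.disjoint_left]; intro x hx1 hx2
    simp only [hA1, hA3, Finset.mem_filter] at hx1 hx2; tauto
  have hd14 : Disjoint A1 A4 := by
    rw [Finset.disjoint_left]; intro x hx1 hx2
    simp only [hA1, hA4, Finset.mem_filter] at hx1 hx2; tauto
  have hd23 : Disjoint A2 A3 := by
    rw [Finset.disjoint_left]; intro x hx1 hx2
    simp only [hA2, hA3, Finset.mem_filter] at hx1 hx2; tauto
  have hd24 : Disjoint A2 A4 := by
    rw [Finset.disjoint_left]; intro x hx1 hx2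
    simp only [hA2, hA4, Finset.mem_filter] at hx1 hx2; tauto
  have hd34 : Disjoint A3 A4 := by
    rw [Finset.disjoint_left]; intro x hx1 hx2
    simp only [hA3, hA4, Finset.mem_filter] at hx1 hx2; tauto
  have hunion : A1 ∪ A2 ∪ A3 ∪ A4 = X := by
    ext x
    simp only [Finset.mem_union, hA1, hA2, hA3, hA4, Finset.mem_filter]
    constructor
    · rintro (((h|h)|h)|h) <;> exact h.1
    · intro hx
      by_cases hPx : P x <;> by_cases hRx : R x <;> tauto
  obtain ⟨x1, hx1, x2, hx2, x3, hx3, x4, hx4, hq⟩ :=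
    hfour A1 A2 A3 A4 ⟨a, hmem1⟩ ⟨b, hmem2⟩ ⟨c, hmem3⟩ ⟨d, hmem4⟩
      hd12 hd13 hd14 hd23 hd24 hd34 hunion
  simp only [hA1, hA2, hA3, hA4, Finset.mem_filter] at hx1 hx2 hx3 hx4
  have hT : T.ResolvesAs x1 x2 x3 x4 :=
    hPsplit _ _ _ _ hx1.2.1 hx2.2.1 hx3.2.1 hx4.2.1
  have hT2 : T'.ResolvesAs x1 x3 x2 x4 :=
    hRsplit _ _ _ _ hx1.2.2 hx3.2.2 hx2.2.2 hx4.2.2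
  have hiden := hQ _ hq
  have hT1 : T'.ResolvesAs x1 x2 x3 x4 := (hiden x1 x2 x3 x4 rfl).mp hT
  exact res_excl hT1 hT2

end PhyloTree
namespace PhyloTree

variable {α : Type} {X : Finset α}

/-- Step A: under the four-way partition property the two trees agree on all quartets. -/
lemma res_imp [DecidableEq α] {T T' : PhyloTree X} {S : Set (Finset α)}
    (hfour : FourWayPartitionProperty X S)
    (hQ : ∀ q ∈ QSet S, PhyloTree.ResolveIdentically T T' q)
    {a b c d : α} (ha : a ∈ X) (hb : b ∈ X) (hc : c ∈ X) (hd : d ∈ X)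
    (hab : a ≠ b) (hac : a ≠ c) (had : a ≠ d) (hbc : b ≠ c) (hbd : b ≠ d) (hcd : c ≠ d)
    (h : T.ResolvesAs a b c d) : T'.ResolvesAs a b c d := by
  rcases res_total (T := T') ha hb hc hd hab hac had hbc hbd hcd with h' | h' | h'
  · exact h'
  · exact absurd (step_contra hfour hQ ha hb hc hd h h') not_false
  · exact absurd (step_contra hfour hQ ha hb hd hc (res_swap_right h) h') not_false

variable {T : PhyloTree X}

/-- The signature of a vertex: which leaf-to-leaf paths pass through it. -/
def Sig (T : PhyloTree X) (v : T.V) (p q : α) : Prop :=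
  v ∈ (T.pth (T.leaf p) (T.leaf q)).support

lemma sig_leaf {x p q : α} (hx : x ∈ X) (hp : p ∈ X) (hq : q ∈ X) :
    Sig T (T.leaf x) p q ↔ (x = p ∨ x = q) := by
  constructor
  · intro h
    rcases leaf_mem_pth hx h with h' | h'
    · exact Or.inl (T.leaf_inj x hx p hp h')
    · exact Or.inr (T.leaf_inj x hx q hq h')
  · rintro (rfl | rfl)
    · exact pth_start_mem _ _
    · exact pth_end_mem _ _

/-- Signatures over labels determine the vertex. -/
lemma sig_inj (hX : ∃ x, x ∈ X) {u v : T.V}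
    (hsig : ∀ p ∈ X, ∀ q ∈ X, (Sig T u p q ↔ Sig T v p q)) : u = v := by
  rcases labeled_or_internal (T := T) u with ⟨x, hx, hxu⟩ | huint
  · have h1 : Sig T u x x := by
      rw [← hxu]; exact pth_start_mem _ _
    have h2 := (hsig x hx x hx).mp h1
    have := pth_self_support h2
    rw [this, hxu]
  · rcases labeled_or_internal (T := T) v with ⟨x, hx, hxv⟩ | hvint
    · have h1 : Sig T v x x := by
        rw [← hxv]; exact pth_start_mem _ _
      have h2 := (hsig x hx x hx).mpr h1
      have := pth_self_support h2
      rw [this, hxv]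
    · -- both internal
      by_contra hne
      have hne' : u ≠ v := hne
      have hne'' : v ≠ u := fun h => hne h.symm
      obtain ⟨p, hp, hpmem⟩ := exists_leaf_beyond (T := T) (v := v) u hne'
      have hlpu : T.leaf p ≠ u := huint p hp
      have hlpv : T.leaf p ≠ v := hvint p hp
      have hndir : T.dir u (T.leaf p) ≠ T.dir u v := by
        intro heq
        exact ((conn_iff_dir hlpu hne'').mpr heq) hpmem
      obtain ⟨n1, n2, n3, h12, h13, h23, hset⟩ := internal_nbrs huint
      have hadj : ∀ w : T.V, w = n1 ∨ w = n2 ∨ w = n3 → T.G.Adj u w := by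
        intro w hw
        have hmem : w ∈ T.G.neighborSet u := by
          rw [hset]
          rcases hw with rfl | rfl | rfl
          · exact Set.mem_insert _ _
          · exact Set.mem_insert_of_mem _ (Set.mem_insert _ _)
          · exact Set.mem_insert_of_mem _ (Set.mem_insert_of_mem _ rfl)
        exact hmem
      have hcases : ∀ w : T.V, T.G.Adj u w → w = n1 ∨ w = n2 ∨ w = n3 := by
        intro w hw
        have hmem : w ∈ T.G.neighborSet u := hw
        rw [hset] at hmem
        simpa [Set.mem_insert_iff] using hmem
      obtain ⟨ws, hwsadj, hws1, hwsp⟩ :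
          ∃ ws, T.G.Adj u ws ∧ ws ≠ T.dir u v ∧ ws ≠ T.dir u (T.leaf p) := by
        have a1 := hadj n1 (Or.inl rfl)
        have a2 := hadj n2 (Or.inr (Or.inl rfl))
        have a3 := hadj n3 (Or.inr (Or.inr rfl))
        have m1 := hcases _ (dir_adj hne')
        have m2 := hcases _ (dir_adj (Ne.symm hlpu))
        rcases Classical.em (n1 = T.dir u v) with e1 | e1 <;>
          rcases Classical.em (n1 = T.dir u (T.leaf p)) with e2 | e2 <;>
          rcases Classical.em (n2 = T.dir u v) with e3 | e3 <;>
          rcases Classical.em (n2 = T.dir u (T.leaf p)) with e4 | e4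
        all_goals first
          | exact ⟨n1, a1, e1, e2⟩
          | exact ⟨n2, a2, e3, e4⟩
          | (refine ⟨n3, a3, ?_, ?_⟩ <;> intro hh <;> simp_all)
      have hwsu : ws ≠ u := hwsadj.ne'
      obtain ⟨q, hq, hqmem⟩ := exists_leaf_beyond (T := T) (v := u) ws hwsu
      have hlqu : T.leaf q ≠ u := huint q hq
      have f1 : T.Conn u (T.leaf q) ws := by
        intro hmem
        exact hwsu (pth_end_not_mem_front hqmem hmem).symm
      have f2 : T.dir u (T.leaf q) = ws := by
        have := (conn_iff_dir hlqu hwsadj.ne').mp f1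
        rwa [dir_eq_of_adj hwsadj] at this
      have claim1 : Sig T u p q := by
        by_contra hnc
        have : T.Conn u (T.leaf p) (T.leaf q) := hnc
        have := (conn_iff_dir hlpu hlqu).mp this
        rw [f2] at this
        exact hwsp this.symm
      have claim2 : ¬ Sig T v p q := by
        intro hvm
        rcases pth_mem_split (w := u) hvm with hsp | hsp
        · exact hne' (pth_end_not_mem_front hsp hpmem)
        · have hvu : u ∉ (T.pth v (T.leaf q)).support := by
            intro hmem
            exact hne'' (pth_start_not_mem_back hsp hmem).symm
          have : T.Conn u v (T.leaf q) := hvu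
          have := (conn_iff_dir hne'' hlqu).mp this
          rw [f2] at this
          exact hws1 this.symm
      exact claim2 ((hsig p hp q hq).mp claim1)

end PhyloTree
namespace PhyloTree

variable {α : Type} {X : Finset α} {T : PhyloTree X}

/-- Combinatorial side predicate. -/
def Qf (T : PhyloTree X) (w a b p : α) : Prop :=
  p = w ∨ (p ≠ w ∧ p ≠ a ∧ p ≠ b ∧ T.ResolvesAs p w a b)

lemma conn_side {v : T.V} {w a b p : α} (hw : w ∈ X) (ha : a ∈ X) (hb : b ∈ X)
    (hp : p ∈ X) (hwa : w ≠ a) (hwb : w ≠ b) (hab : a ≠ b)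
    (h1 : v ∈ (T.pth (T.leaf w) (T.leaf a)).support)
    (h2 : v ∈ (T.pth (T.leaf w) (T.leaf b)).support)
    (h3 : v ∈ (T.pth (T.leaf a) (T.leaf b)).support) :
    T.Conn v (T.leaf p) (T.leaf w) ↔ Qf T w a b p := by
  have hint : T.Internal v := internal_of_three hw ha hb hwa hwb hab h1 h2 h3
  by_cases hpw : p = w
  · subst hpw
    simp only [Qf, true_or, iff_true]
    exact conn_self (fun h => hint p hp h.symm)
  · by_cases hpa : p = a
    · subst hpa
      constructor
      · intro hc; exact absurd (mem_pth_symm h1) hc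
      · rintro (h | h)
        · exact absurd h hpw
        · exact absurd rfl h.2.1
    · by_cases hpb : p = b
      · subst hpb
        constructor
        · intro hc; exact absurd (mem_pth_symm h2) hc
        · rintro (h | h)
          · exact absurd h hpw
          · exact absurd rfl h.2.2.1
      · rw [conn_iff_res hw ha hb hp hwa hwb hab hpw hpa hpb h1 h2 h3]
        constructor
        · intro hr; exact Or.inr ⟨hpw, hpa, hpb, hr⟩
        · rintro (h | h)
          · exact absurd h hpw
          · exact h.2.2.2

/-- Signature of an internal vertex in terms of quartet resolutions. -/
lemma sig_char {v : T.V} {x y z : α} (hx : x ∈ X) (hy : y ∈ X) (hz : z ∈ X)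
    (hxy : x ≠ y) (hxz : x ≠ z) (hyz : y ≠ z)
    (h1 : v ∈ (T.pth (T.leaf x) (T.leaf y)).support)
    (h2 : v ∈ (T.pth (T.leaf x) (T.leaf z)).support)
    (h3 : v ∈ (T.pth (T.leaf y) (T.leaf z)).support)
    {p q : α} (hp : p ∈ X) (hq : q ∈ X) :
    Sig T v p q ↔
      ¬ ((Qf T x y z p ∧ Qf T x y z q) ∨ (Qf T y x z p ∧ Qf T y x z q) ∨
         (Qf T z x y p ∧ Qf T z x y q)) := by
  have cx : ∀ r : α, r ∈ X → (T.Conn v (T.leaf r) (T.leaf x) ↔ Qf T x y z r) :=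
    fun r hr => conn_side hx hy hz hr hxy hxz hyz h1 h2 h3
  have cy : ∀ r : α, r ∈ X → (T.Conn v (T.leaf r) (T.leaf y) ↔ Qf T y x z r) :=
    fun r hr => conn_side hy hx hz hr (Ne.symm hxy) hyz hxz (mem_pth_symm h1) h3 h2
  have cz : ∀ r : α, r ∈ X → (T.Conn v (T.leaf r) (T.leaf z) ↔ Qf T z x y r) :=
    fun r hr => conn_side hz hx hy hr (Ne.symm hxz) (Ne.symm hyz) hxy
      (mem_pth_symm h2) (mem_pth_symm h3) h1
  have main : T.Conn v (T.leaf p) (T.leaf q) ↔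
      ((Qf T x y z p ∧ Qf T x y z q) ∨ (Qf T y x z p ∧ Qf T y x z q) ∨
       (Qf T z x y p ∧ Qf T z x y q)) := by
    constructor
    · intro hc
      rcases conn_one_of_three hx hy hz hxy hxz hyz h1 h2 h3 hp with h | h | h
      · exact Or.inl ⟨(cx p hp).mp h, (cx q hq).mp (hc.symm.trans h)⟩
      · exact Or.inr (Or.inl ⟨(cy p hp).mp h, (cy q hq).mp (hc.symm.trans h)⟩)
      · exact Or.inr (Or.inr ⟨(cz p hp).mp h, (cz q hq).mp (hc.symm.trans h)⟩)
    · rintro (⟨hpx, hqx⟩ | ⟨hpy, hqy⟩ | ⟨hpz, hqz⟩)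
      · exact ((cx p hp).mpr hpx).trans ((cx q hq).mpr hqx).symm
      · exact ((cy p hp).mpr hpy).trans ((cy q hq).mpr hqy).symm
      · exact ((cz p hp).mpr hpz).trans ((cz q hq).mpr hqz).symm
  constructor
  · intro hs hform
    exact (main.mpr hform) hs
  · intro hform
    by_contra hns
    exact hform (main.mp hns)

/-- The two trees agree on all quartets of distinct labels. -/
def Agree (T T' : PhyloTree X) : Prop :=
  ∀ p q r s : α, p ∈ X → q ∈ X → r ∈ X → s ∈ X →
    p ≠ q → p ≠ r → p ≠ s → q ≠ r → q ≠ s → r ≠ s →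
    (T.ResolvesAs p q r s ↔ T'.ResolvesAs p q r s)

lemma qf_transfer {T' : PhyloTree X} (hag : Agree T T') {w a b p : α}
    (hw : w ∈ X) (ha : a ∈ X) (hb : b ∈ X) (hp : p ∈ X)
    (hwa : w ≠ a) (hwb : w ≠ b) (hab : a ≠ b) :
    Qf T w a b p ↔ Qf T' w a b p := by
  unfold Qf
  constructor <;> rintro (rfl | ⟨g1, g2, g3, hr⟩)
  · exact Or.inl rfl
  · exact Or.inr ⟨g1, g2, g3, (hag p w a b hp hw ha hb g1 g2 g3 hwa hwb hab).mp hr⟩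
  · exact Or.inl rfl
  · exact Or.inr ⟨g1, g2, g3, (hag p w a b hp hw ha hb g1 g2 g3 hwa hwb hab).mpr hr⟩

/-- Every internal vertex is the median of three distinct labels. -/
lemma internal_triple {v : T.V} (hv : T.Internal v) :
    ∃ x ∈ X, ∃ y ∈ X, ∃ z ∈ X, x ≠ y ∧ x ≠ z ∧ y ≠ z ∧
      v ∈ (T.pth (T.leaf x) (T.leaf y)).support ∧
      v ∈ (T.pth (T.leaf x) (T.leaf z)).support ∧
      v ∈ (T.pth (T.leaf y) (T.leaf z)).support := by
  obtain ⟨n1, n2, n3, h12, h13, h23, hset⟩ := internal_nbrs hv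
  have hadj : ∀ w : T.V, w = n1 ∨ w = n2 ∨ w = n3 → T.G.Adj v w := by
    intro w hw
    have hmem : w ∈ T.G.neighborSet v := by
      rw [hset]
      rcases hw with rfl | rfl | rfl
      · exact Set.mem_insert _ _
      · exact Set.mem_insert_of_mem _ (Set.mem_insert _ _)
      · exact Set.mem_insert_of_mem _ (Set.mem_insert_of_mem _ rfl)
    exact hmem
  have a1 := hadj n1 (Or.inl rfl)
  have a2 := hadj n2 (Or.inr (Or.inl rfl))
  have a3 := hadj n3 (Or.inr (Or.inr rfl))
  obtain ⟨x, hx, hex⟩ := exists_leaf_beyond (T := T) (v := v) n1 a1.ne'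
  obtain ⟨y, hy, hey⟩ := exists_leaf_beyond (T := T) (v := v) n2 a2.ne'
  obtain ⟨z, hz, hez⟩ := exists_leaf_beyond (T := T) (v := v) n3 a3.ne'
  have c1 : T.Conn v (T.leaf x) n1 :=
    fun hmem => a1.ne (pth_end_not_mem_front hex hmem)
  have c2 : T.Conn v (T.leaf y) n2 :=
    fun hmem => a2.ne (pth_end_not_mem_front hey hmem)
  have c3 : T.Conn v (T.leaf z) n3 :=
    fun hmem => a3.ne (pth_end_not_mem_front hez hmem)
  have hnc12 : ¬ T.Conn v (T.leaf x) (T.leaf y) :=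
    fun hcon => not_conn_of_adj a1 a2 h12 ((c1.symm.trans hcon).trans c2)
  have hnc13 : ¬ T.Conn v (T.leaf x) (T.leaf z) :=
    fun hcon => not_conn_of_adj a1 a3 h13 ((c1.symm.trans hcon).trans c3)
  have hnc23 : ¬ T.Conn v (T.leaf y) (T.leaf z) :=
    fun hcon => not_conn_of_adj a2 a3 h23 ((c2.symm.trans hcon).trans c3)
  have hself : ∀ r : α, r ∈ X → T.Conn v (T.leaf r) (T.leaf r) :=
    fun r hr => conn_self (fun h => hv r hr h.symm)
  refine ⟨x, hx, y, hy, z, hz, ?_, ?_, ?_, ?_, ?_, ?_⟩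
  · intro h; subst h; exact hnc12 (hself x hx)
  · intro h; subst h; exact hnc13 (hself x hx)
  · intro h; subst h; exact hnc23 (hself y hy)
  · exact not_not.mp hnc12
  · exact not_not.mp hnc13
  · exact not_not.mp hnc23

/-- B2: each vertex of `T` has a signature twin in `T'`. -/
lemma sig_transfer {T' : PhyloTree X} (hag : Agree T T') (v : T.V) :
    ∃ v' : T'.V, ∀ p ∈ X, ∀ q ∈ X, (Sig T v p q ↔ Sig T' v' p q) := by
  rcases labeled_or_internal (T := T) v with ⟨x, hx, hxv⟩ | hvint
  · refine ⟨T'.leaf x, fun p hp q hq => ?_⟩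
    rw [← hxv, sig_leaf hx hp hq, sig_leaf hx hp hq]
  · obtain ⟨x, hx, y, hy, z, hz, hxy, hxz, hyz, h1, h2, h3⟩ := internal_triple hvint
    obtain ⟨v', h1', h2', h3'⟩ :=
      med_exists (T := T') (T'.leaf x) (T'.leaf y) (T'.leaf z)
    refine ⟨v', fun p hp q hq => ?_⟩
    rw [sig_char hx hy hz hxy hxz hyz h1 h2 h3 hp hq,
      sig_char hx hy hz hxy hxz hyz h1' h2' h3' hp hq]
    rw [qf_transfer hag hx hy hz hp hxy hxz hyz,
      qf_transfer hag hx hy hz hq hxy hxz hyz,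
      qf_transfer hag hy hx hz hp (Ne.symm hxy) hyz hxz,
      qf_transfer hag hy hx hz hq (Ne.symm hxy) hyz hxz,
      qf_transfer hag hz hx hy hp (Ne.symm hxz) (Ne.symm hyz) hxy,
      qf_transfer hag hz hx hy hq (Ne.symm hxz) (Ne.symm hyz) hxy]

end PhyloTree
namespace PhyloTree

variable {α : Type} {X : Finset α} {T : PhyloTree X}

/-- Order claim: if every leaf-path through `v` from `p` also passes `u`,
then `u` lies between `leaf p` and `v`. -/
lemma ord_claim {p q : α} {u v : T.V} (hp : p ∈ X) (hq : q ∈ X)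
    (hu : u ∈ (T.pth (T.leaf p) (T.leaf q)).support)
    (hv : v ∈ (T.pth (T.leaf p) (T.leaf q)).support)
    (hne : u ≠ v)
    (hord : ∀ r ∈ X, Sig T v p r → Sig T u p r) :
    u ∈ (T.pth (T.leaf p) v).support := by
  rcases pth_mem_split (w := u) hv with hcase | hcase
  · -- v ∈ pth(leaf p, u) : derive contradiction or direct conclusion
    rcases labeled_or_internal (T := T) v with ⟨t, ht, htv⟩ | hvint
    · -- v is a labeled leaf: then Sig T v p t holds trivially
      have hsv : Sig T v p t := by
        rw [← htv]; exact pth_end_mem _ _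
      have hsu := hord t ht hsv
      show u ∈ (T.pth (T.leaf p) v).support
      rw [← htv]
      exact hsu
    · -- v internal, strictly between leaf p and u : contradiction with hord
      exfalso
      have hvu : v ≠ u := Ne.symm hne
      have hlpv : T.leaf p ≠ v := hvint p hp
      have hndir : T.dir v (T.leaf p) ≠ T.dir v u := by
        intro heq
        exact ((conn_iff_dir hlpv (Ne.symm hvu)).mpr heq) hcase
      obtain ⟨n1, n2, n3, h12, h13, h23, hset⟩ := internal_nbrs hvint
      have hadj : ∀ w : T.V, w = n1 ∨ w = n2 ∨ w = n3 → T.G.Adj v w := by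
        intro w hw
        have hmem : w ∈ T.G.neighborSet v := by
          rw [hset]
          rcases hw with rfl | rfl | rfl
          · exact Set.mem_insert _ _
          · exact Set.mem_insert_of_mem _ (Set.mem_insert _ _)
          · exact Set.mem_insert_of_mem _ (Set.mem_insert_of_mem _ rfl)
        exact hmem
      have hcases : ∀ w : T.V, T.G.Adj v w → w = n1 ∨ w = n2 ∨ w = n3 := by
        intro w hw
        have hmem : w ∈ T.G.neighborSet v := hw
        rw [hset] at hmem
        simpa [Set.mem_insert_iff] using hmem
      obtain ⟨ws, hwsadj, hws1, hwsp⟩ :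
          ∃ ws, T.G.Adj v ws ∧ ws ≠ T.dir v u ∧ ws ≠ T.dir v (T.leaf p) := by
        have a1 := hadj n1 (Or.inl rfl)
        have a2 := hadj n2 (Or.inr (Or.inl rfl))
        have a3 := hadj n3 (Or.inr (Or.inr rfl))
        have m1 := hcases _ (dir_adj hvu)
        have m2 := hcases _ (dir_adj (Ne.symm hlpv))
        rcases Classical.em (n1 = T.dir v u) with e1 | e1 <;>
          rcases Classical.em (n1 = T.dir v (T.leaf p)) with e2 | e2 <;>
          rcases Classical.em (n2 = T.dir v u) with e3 | e3 <;>
          rcases Classical.em (n2 = T.dir v (T.leaf p)) with e4 | e4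
        all_goals first
          | exact ⟨n1, a1, e1, e2⟩
          | exact ⟨n2, a2, e3, e4⟩
          | (refine ⟨n3, a3, ?_, ?_⟩ <;> intro hh <;> simp_all)
      obtain ⟨r, hr, hrmem⟩ := exists_leaf_beyond (T := T) (v := v) ws hwsadj.ne'
      have hlrv : T.leaf r ≠ v := hvint r hr
      have f1 : T.Conn v (T.leaf r) ws :=
        fun hmem => hwsadj.ne (pth_end_not_mem_front hrmem hmem)
      have f2 : T.dir v (T.leaf r) = ws := by
        have := (conn_iff_dir hlrv hwsadj.ne').mp f1
        rwa [dir_eq_of_adj hwsadj] at this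
      have hsv : Sig T v p r := by
        by_contra hnc
        have hcon : T.Conn v (T.leaf p) (T.leaf r) := hnc
        have := (conn_iff_dir hlpv hlrv).mp hcon
        rw [f2] at this
        exact hwsp this.symm
      have hsu := hord r hr hsv
      -- u on pth(leaf p, leaf r); v also on it; split u at v
      have hvm : v ∈ (T.pth (T.leaf p) (T.leaf r)).support := hsv
      rcases pth_mem_split (w := v) hsu with hsp | hsp
      · exact hne (pth_end_not_mem_front hcase hsp)
      · have hvnot : v ∉ (T.pth u (T.leaf r)).support := by
          intro hmem
          exact hvu (pth_start_not_mem_back hsp hmem)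
        have hcon : T.Conn v u (T.leaf r) := hvnot
        have := (conn_iff_dir (Ne.symm hvu) hlrv).mp hcon
        rw [f2] at this
        exact hws1 this.symm
  · -- v ∈ pth(u, leaf q) : direct
    exact mem_left_of_mem_right hu hcase

/-- Betweenness characterized by signatures. -/
lemma between_char {u v w : T.V} :
    w ∈ (T.pth u v).support ↔
      (w = u ∨ w = v ∨ ∃ p ∈ X, ∃ q ∈ X,
        Sig T u p q ∧ Sig T w p q ∧ Sig T v p q ∧
        (∀ r ∈ X, Sig T w p r → Sig T u p r) ∧
        (∀ r ∈ X, Sig T v p r → Sig T w p r)) := by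
  constructor
  · intro hmem
    by_cases hwu : w = u
    · exact Or.inl hwu
    by_cases hwv : w = v
    · exact Or.inr (Or.inl hwv)
    by_cases huv : u = v
    · exact absurd (pth_self_support (huv ▸ hmem)) hwu
    right; right
    obtain ⟨p, hp, hpu⟩ := exists_leaf_beyond (T := T) (v := v) u huv
    obtain ⟨q, hq, hqv⟩ := exists_leaf_beyond (T := T) (v := u) v (Ne.symm huv)
    -- v ∉ pth(leaf p, u) and pth(leaf q, v) glue at v
    have hvnotpu : v ∉ (T.pth (T.leaf p) u).support := by
      intro hmem'
      exact huv (pth_end_not_mem_front hpu hmem').symm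
    have hunotqv : u ∉ (T.pth (T.leaf q) v).support := by
      intro hmem'
      exact huv (pth_end_not_mem_front hqv hmem')
    have hjun : ∀ t, t ∈ (T.pth (T.leaf p) v).support →
        t ∈ (T.pth v (T.leaf q)).support → t = v := by
      intro t ht1 ht2
      by_contra htv
      have c1 : T.Conn v (T.leaf p) t :=
        fun hm => htv (pth_end_not_mem_front ht1 hm).symm
      have c2 : T.Conn v (T.leaf q) t := by
        intro hm
        exact htv (pth_end_not_mem_front (mem_pth_symm ht2) hm).symm
      have c3 : T.Conn v (T.leaf p) u :=
        fun hm => huv (pth_end_not_mem_front hpu hm).symm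
      have : T.Conn v (T.leaf q) u := (c2.trans c1.symm).trans c3
      exact this hqv
    have hglue := pth_append hjun
    have humem : u ∈ (T.pth (T.leaf p) (T.leaf q)).support :=
      mem_pth_append hjun (Or.inl hpu)
    have hwpv : w ∈ (T.pth (T.leaf p) v).support :=
      pth_support_subset_right hpu hmem
    have hwmem : w ∈ (T.pth (T.leaf p) (T.leaf q)).support :=
      mem_pth_append hjun (Or.inl hwpv)
    have hvmem : v ∈ (T.pth (T.leaf p) (T.leaf q)).support :=
      mem_pth_append hjun (Or.inl (pth_end_mem _ _))
    have hupw : u ∈ (T.pth (T.leaf p) w).support :=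
      mem_left_of_mem_right hpu hmem
    refine ⟨p, hp, q, hq, humem, hwmem, hvmem, ?_, ?_⟩
    · intro r hr hs
      exact pth_support_subset_left hs hupw
    · intro r hr hs
      exact pth_support_subset_left hs hwpv
  · rintro (rfl | rfl | ⟨p, hp, q, hq, hsu, hsw, hsv, ho1, ho2⟩)
    · exact pth_start_mem _ _
    · exact pth_end_mem _ _
    by_cases hwu : w = u
    · subst hwu; exact pth_start_mem _ _
    by_cases hwv : w = v
    · subst hwv; exact pth_end_mem _ _
    have hupw : u ∈ (T.pth (T.leaf p) w).support :=
      ord_claim hp hq hsu hsw (fun h => hwu h.symm) ho1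
    have hwpv : w ∈ (T.pth (T.leaf p) v).support :=
      ord_claim hp hq hsw hsv hwv ho2
    rcases pth_mem_split (w := u) hwpv with hsp | hsp
    · exact absurd (pth_end_not_mem_front hsp hupw) (fun h => hwu h.symm)
    · exact hsp

/-- Adjacency characterized by path supports. -/
lemma adj_char {u v : T.V} :
    T.G.Adj u v ↔ u ≠ v ∧ ∀ w, w ∈ (T.pth u v).support → w = u ∨ w = v := by
  constructor
  · intro hadj
    refine ⟨hadj.ne, ?_⟩
    have : SimpleGraph.Walk.cons hadj SimpleGraph.Walk.nil = T.pth u v := by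
      apply eq_pth
      rw [SimpleGraph.Walk.cons_isPath_iff]
      exact ⟨SimpleGraph.Walk.IsPath.nil, by simp [hadj.ne]⟩
    intro w hw
    rw [← this] at hw
    simpa using hw
  · rintro ⟨hne, hall⟩
    obtain ⟨w, ha, hw, hcons⟩ := pth_cons hne
    have hwmem : w ∈ (T.pth u v).support := by
      rw [hcons]; simp [SimpleGraph.Walk.support_cons]
    rcases hall w hwmem with rfl | rfl
    · exact absurd rfl ha.ne
    · exact ha

end PhyloTree
namespace PhyloTree

variable {α : Type} {X : Finset α}

lemma between_transfer {T T' : PhyloTree X} {φ : T.V → T'.V}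
    (hφ : ∀ v : T.V, ∀ p ∈ X, ∀ q ∈ X, (Sig T v p q ↔ Sig T' (φ v) p q))
    (hinj : Function.Injective φ) {u v w : T.V} :
    w ∈ (T.pth u v).support ↔ φ w ∈ (T'.pth (φ u) (φ v)).support := by
  rw [between_char, between_char]
  constructor
  · rintro (rfl | rfl | ⟨p, hp, q, hq, s1, s2, s3, o1, o2⟩)
    · exact Or.inl rfl
    · exact Or.inr (Or.inl rfl)
    · refine Or.inr (Or.inr ⟨p, hp, q, hq, (hφ u p hp q hq).mp s1,
        (hφ w p hp q hq).mp s2, (hφ v p hp q hq).mp s3, ?_, ?_⟩)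
      · intro r hr hs
        exact (hφ u p hp r hr).mp (o1 r hr ((hφ w p hp r hr).mpr hs))
      · intro r hr hs
        exact (hφ w p hp r hr).mp (o2 r hr ((hφ v p hp r hr).mpr hs))
  · rintro (he | he | ⟨p, hp, q, hq, s1, s2, s3, o1, o2⟩)
    · exact Or.inl (hinj he)
    · exact Or.inr (Or.inl (hinj he))
    · refine Or.inr (Or.inr ⟨p, hp, q, hq, (hφ u p hp q hq).mpr s1,
        (hφ w p hp q hq).mpr s2, (hφ v p hp q hq).mpr s3, ?_, ?_⟩)
      · intro r hr hs
        exact (hφ u p hp r hr).mpr (o1 r hr ((hφ w p hp r hr).mp hs))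
      · intro r hr hs
        exact (hφ w p hp r hr).mpr (o2 r hr ((hφ v p hp r hr).mp hs))

end PhyloTree

/-- if `S` satisfies the four-way partition property for `X` then `S`
is phylogenetically decisive for `X`. -/
theorem decisive_of_fourWayPartitionProperty {α : Type} [DecidableEq α]
    (X : Finset α) (hX : 4 ≤ X.card)
    (S : Set (Finset α)) (hS : ∀ Y ∈ S, Y ⊆ X)
    (hfour : FourWayPartitionProperty X S) :
    PhyloDecisive X S := by
  intro T T' hQ
  classical
  have hXne : ∃ x, x ∈ X := by
    have hpos : 0 < X.card := by omega
    obtain ⟨x, hx⟩ := Finset.card_pos.mp hpos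
    exact ⟨x, hx⟩
  have hQ' : ∀ q ∈ QSet S, PhyloTree.ResolveIdentically T' T q := by
    intro q hq a b c d he
    exact (hQ q hq a b c d he).symm
  have hag : PhyloTree.Agree T T' := by
    intro p q r s hp hq hr hs h1 h2 h3 h4 h5 h6
    constructor
    · exact PhyloTree.res_imp hfour hQ hp hq hr hs h1 h2 h3 h4 h5 h6
    · exact PhyloTree.res_imp hfour hQ' hp hq hr hs h1 h2 h3 h4 h5 h6
  have hag' : PhyloTree.Agree T' T := fun p q r s hp hq hr hs h1 h2 h3 h4 h5 h6 =>
    (hag p q r s hp hq hr hs h1 h2 h3 h4 h5 h6).symm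
  choose φ hφ using PhyloTree.sig_transfer hag
  choose ψ hψ using PhyloTree.sig_transfer hag'
  have hinj : Function.Injective φ := by
    intro u v h
    apply PhyloTree.sig_inj hXne
    intro p hp q hq
    rw [hφ u p hp q hq, h, ← hφ v p hp q hq]
  have hsurj : Function.Surjective φ := by
    intro v'
    refine ⟨ψ v', ?_⟩
    apply PhyloTree.sig_inj (T := T') hXne
    intro p hp q hq
    rw [← hφ (ψ v') p hp q hq, ← hψ v' p hp q hq]
  have hbij : Function.Bijective φ := ⟨hinj, hsurj⟩
  have hbt : ∀ u v w : T.V,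
      w ∈ (T.pth u v).support ↔ φ w ∈ (T'.pth (φ u) (φ v)).support :=
    fun u v w => PhyloTree.between_transfer hφ hinj
  have hadj : ∀ u v : T.V, T'.G.Adj (φ u) (φ v) ↔ T.G.Adj u v := by
    intro u v
    rw [PhyloTree.adj_char, PhyloTree.adj_char]
    constructor
    · rintro ⟨hne, hall⟩
      refine ⟨fun h => hne (congrArg φ h), ?_⟩
      intro w hw
      rcases hall (φ w) ((hbt u v w).mp hw) with h | h
      · exact Or.inl (hinj h)
      · exact Or.inr (hinj h)
    · rintro ⟨hne, hall⟩
      refine ⟨fun h => hne (hinj h), ?_⟩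
      intro w' hw'
      obtain ⟨w, rfl⟩ := hsurj w'
      rcases hall w ((hbt u v w).mpr hw') with rfl | rfl
      · exact Or.inl rfl
      · exact Or.inr rfl
  refine ⟨⟨Equiv.ofBijective φ hbij, ?_⟩, ?_⟩
  · intro a b
    exact hadj a b
  · intro x hx
    show φ (T.leaf x) = T'.leaf x
    apply PhyloTree.sig_inj (T := T') hXne
    intro p hp q hq
    rw [← hφ (T.leaf x) p hp q hq, PhyloTree.sig_leaf hx hp hq,
      PhyloTree.sig_leaf hx hp hq]
end

section
/- Let T be a binary phylogenetic X-tree with |X| ≥ 4 and let a, b ∈ X be distinct. If the leaves labeled a and b do not form a cherry of T, then there exists a pair of nonempty sets C, D that partition X − {a,b} such that for every c ∈ C and every d ∈ D, T does not resolve the quartet {a,b,c,d} as ab|cd. -/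
section
set_option linter.unusedSectionVars false

open SimpleGraph Walk

namespace PhyloHelpers

variable {V : Type} [DecidableEq V] {G : SimpleGraph V}

noncomputable def pth (hc : G.Connected) (u v : V) : G.Walk u v :=
  ((hc.preconnected u v).some.toPath : G.Path u v).1

lemma pth_isPath (hc : G.Connected) (u v : V) : (pth hc u v).IsPath :=
  ((hc.preconnected u v).some.toPath).2

lemma eq_pth (hc : G.Connected) (hg : G.IsAcyclic) {u v : V} (q : G.Walk u v)
    (hq : q.IsPath) : q = pth hc u v :=
  congrArg Subtype.val (hg.path_unique ⟨q, hq⟩ ⟨pth hc u v, pth_isPath hc u v⟩)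

lemma pth_subset (hc : G.Connected) (hg : G.IsAcyclic) {u v : V} (q : G.Walk u v) :
    (pth hc u v).support ⊆ q.support := by
  rw [← eq_pth hc hg q.bypass q.bypass_isPath]
  exact q.support_bypass_subset

lemma pth_nil (hc : G.Connected) (hg : G.IsAcyclic) (u : V) :
    pth hc u u = Walk.nil := (eq_pth hc hg .nil (by simp)).symm

lemma pth_mem_union (hc : G.Connected) (hg : G.IsAcyclic) (u v z : V) {y : V}
    (hy : y ∈ (pth hc u z).support) :
    y ∈ (pth hc u v).support ∨ y ∈ (pth hc v z).support := by
  have := pth_subset hc hg ((pth hc u v).append (pth hc v z)) hy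
  rwa [Walk.mem_support_append_iff] at this

lemma snd_mem_support' {u v : V} (p : G.Walk u v) (hp : ¬ p.Nil) :
    p.getVert 1 ∈ p.support := by
  rw [← cons_support_tail hp]
  exact List.mem_cons_of_mem _ p.tail.start_mem_support

lemma snd_eq (hg : G.IsAcyclic) {u v m : V} {p : G.Walk u v}
    (hp : p.IsPath) (hm : m ∈ p.support) (h : G.Adj u m) : p.getVert 1 = m := by
  have h1 : p.takeUntil m hm = Walk.cons h Walk.nil :=
    congrArg Subtype.val (hg.path_unique ⟨p.takeUntil m hm, hp.takeUntil hm⟩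
      ⟨Walk.cons h Walk.nil, by simp [h.ne]⟩)
  have h2 := p.take_spec hm
  rw [h1] at h2
  rw [← h2]
  simp

lemma tail_mem_support_tail {u v : V} (p : G.Walk u v) (hp : ¬ p.Nil) :
    p.getVert 1 ∈ p.support.tail := by
  rw [← cons_support_tail hp]
  exact p.tail.start_mem_support

lemma interior_ncard_ne_one {u v y : V} {p : G.Walk u v} (hp : p.IsPath)
    (hy : y ∈ p.support) (hyu : y ≠ u) (hyv : y ≠ v) : (G.neighborSet y).ncard ≠ 1 := by
  intro hcard
  obtain ⟨z, hz⟩ := Set.ncard_eq_one.mp hcard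
  set p1 := p.takeUntil y hy with hp1def
  set p2 := p.dropUntil y hy with hp2def
  have hp1nil : ¬ p1.reverse.Nil := not_nil_of_ne hyu
  have hp2nil : ¬ p2.Nil := not_nil_of_ne hyv
  have hn1adj : G.Adj y (p1.reverse.getVert 1) := Walk.adj_snd (p := p1.reverse) hp1nil
  have hn2adj : G.Adj y (p2.getVert 1) := Walk.adj_snd (p := p2) hp2nil
  have hn1 : p1.reverse.getVert 1 = z := by
    have : p1.reverse.getVert 1 ∈ G.neighborSet y := hn1adj
    rwa [hz, Set.mem_singleton_iff] at this
  have hn2 : p2.getVert 1 = z := by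
    have : p2.getVert 1 ∈ G.neighborSet y := hn2adj
    rwa [hz, Set.mem_singleton_iff] at this
  have hsupp : p.support = p1.support ++ p2.support.tail := by
    rw [← support_append, take_spec]
  have hnodup : (p1.support ++ p2.support.tail).Nodup := by
    rw [← hsupp]; exact hp.support_nodup
  have hdisj := List.disjoint_of_nodup_append hnodup
  have hm1 : p1.reverse.getVert 1 ∈ p1.support := by
    have := snd_mem_support' p1.reverse hp1nil
    rwa [support_reverse, List.mem_reverse] at this
  have hm2 : p2.getVert 1 ∈ p2.support.tail := tail_mem_support_tail p2 hp2nil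
  exact hdisj (hn1 ▸ hm1) (hn2 ▸ hm2)

lemma concat_isPath' {u v w : V} {p : G.Walk u v} (hp : p.IsPath) (h : G.Adj v w)
    (hw : w ∉ p.support) : (p.concat h).IsPath := by
  have : (p.concat h).reverse.IsPath := by
    rw [reverse_concat]
    exact (hp.reverse).cons (by simpa using hw)
  rw [concat_eq_append]
  simpa using this.reverse

lemma exists_leaf_dir [Fintype V] (hc : G.Connected) (hg : G.IsAcyclic)
    {v n : V} (h : G.Adj v n) :
    ∃ z : V, (G.neighborSet z).ncard = 1 ∧ n ∈ (pth hc v z).support := by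
  obtain ⟨z, hzmem, hzmax⟩ := Finset.exists_max_image
    (Finset.univ.filter fun z => n ∈ (pth hc v z).support)
    (fun z => (pth hc v z).length)
    ⟨n, by simp [Walk.end_mem_support]⟩
  simp only [Finset.mem_filter, Finset.mem_univ, true_and] at hzmem
  have hzv : z ≠ v := by
    rintro rfl
    rw [pth_nil hc hg] at hzmem
    simp only [Walk.support_nil, List.mem_singleton] at hzmem
    exact h.ne' hzmem
  have hnil : ¬ (pth hc v z).Nil := not_nil_of_ne (Ne.symm hzv)
  have hrnil : ¬ (pth hc v z).reverse.Nil := not_nil_of_ne hzv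
  have hm : G.Adj z ((pth hc v z).reverse.getVert 1) :=
    Walk.adj_snd (p := (pth hc v z).reverse) hrnil
  refine ⟨z, ?_, hzmem⟩
  have key : ∀ m', m' ∈ G.neighborSet z → m' = (pth hc v z).reverse.getVert 1 := by
    intro m' hm'
    have hadj : G.Adj z m' := hm'
    by_cases hmem : m' ∈ (pth hc v z).support
    · have : (pth hc v z).reverse.getVert 1 = m' :=
        snd_eq hg (pth_isPath hc v z).reverse
          (by rwa [support_reverse, List.mem_reverse]) hadj
      exact this.symm
    · exfalso
      have hq : ((pth hc v z).concat hadj).IsPath :=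
        concat_isPath' (pth_isPath hc v z) hadj hmem
      have heq : (pth hc v z).concat hadj = pth hc v m' := eq_pth hc hg _ hq
      have hnmem : n ∈ (pth hc v m').support := by
        rw [← heq, support_concat, List.mem_append]
        exact Or.inl hzmem
      have hle := hzmax m' (by simp [hnmem])
      rw [← heq, length_concat] at hle
      omega
  have hset : G.neighborSet z = {(pth hc v z).reverse.getVert 1} :=
    Set.eq_singleton_iff_unique_mem.mpr ⟨hm, key⟩
  rw [hset, Set.ncard_singleton]

end PhyloHelpers


open PhyloHelpers SimpleGraph Walk in
/-- Lemma 1(ii): if the leaves labeled `a, b` do not form a cherry of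
`T`, there are nonempty sets `C, D` partitioning `X − {a,b}` such that for all
`c ∈ C`, `d ∈ D`, the tree `T` does not resolve `{a,b,c,d}` as `ab|cd`. -/
theorem not_cherry_exists_partition {α : Type} [DecidableEq α]
    {X : Finset α} (hX : 4 ≤ X.card) (T : PhyloTree X)
    (a b : α) (ha : a ∈ X) (hb : b ∈ X) (hab : a ≠ b)
    (hnotcherry : ¬ T.IsCherry a b) :
    ∃ C D : Finset α, C.Nonempty ∧ D.Nonempty ∧ Disjoint C D ∧
      C ∪ D = X \ {a, b} ∧
      ∀ c ∈ C, ∀ d ∈ D, ¬ T.ResolvesAs a b c d := by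
  classical
  haveI : Fintype T.V := T.fintypeV
  have hc := T.connected
  have hg := T.acyclic
  set A := T.leaf a with hAdef
  set B := T.leaf b with hBdef
  have hABne : A ≠ B := fun h => hab (T.leaf_inj a ha b hb h)
  have degA : (T.G.neighborSet A).ncard = 1 := T.leaf_degree a ha
  have degB : (T.G.neighborSet B).ncard = 1 := T.leaf_degree b hb
  have hnotadj : ¬ T.G.Adj A B := by
    intro hadj
    have hle : ({a, b} : Finset α).card ≤ 2 := by
      apply le_trans (Finset.card_insert_le a {b})
      simp
    have hsd := Finset.le_card_sdiff ({a, b} : Finset α) X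
    have hcard : 0 < (X \ {a, b}).card := by omega
    obtain ⟨c0, hc0⟩ := Finset.card_pos.mp hcard
    rw [Finset.mem_sdiff, Finset.mem_insert, Finset.mem_singleton] at hc0
    obtain ⟨hc0X, hc0ab⟩ := hc0
    push_neg at hc0ab
    have hZ0A : T.leaf c0 ≠ A := fun h => hc0ab.1 (T.leaf_inj c0 hc0X a ha h)
    have hZ0B : T.leaf c0 ≠ B := fun h => hc0ab.2 (T.leaf_inj c0 hc0X b hb h)
    have hnil : ¬ (pth hc (T.leaf c0) B).reverse.Nil := not_nil_of_ne (Ne.symm hZ0B)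
    have hpen : T.G.Adj B ((pth hc (T.leaf c0) B).reverse.getVert 1) :=
      Walk.adj_snd (p := (pth hc (T.leaf c0) B).reverse) hnil
    obtain ⟨zB, hzB'⟩ := Set.ncard_eq_one.mp degB
    have hAz : A = zB := by
      have : A ∈ T.G.neighborSet B := hadj.symm
      rwa [hzB', Set.mem_singleton_iff] at this
    have hpenA : (pth hc (T.leaf c0) B).reverse.getVert 1 = A := by
      have hpm : (pth hc (T.leaf c0) B).reverse.getVert 1 ∈ T.G.neighborSet B := hpen
      rw [hzB', Set.mem_singleton_iff] at hpm
      rw [hpm, ← hAz]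
    have hAmem : A ∈ (pth hc (T.leaf c0) B).support := by
      have := snd_mem_support' (pth hc (T.leaf c0) B).reverse hnil
      rw [hpenA, support_reverse, List.mem_reverse] at this
      exact this
    exact interior_ncard_ne_one (pth_isPath hc (T.leaf c0) B) hAmem (Ne.symm hZ0A) hABne degA
  set P := pth hc A B with hPdef
  have hPpath : P.IsPath := pth_isPath hc A B
  have hPnil : ¬ P.Nil := not_nil_of_ne hABne
  have hPrnil : ¬ P.reverse.Nil := not_nil_of_ne (Ne.symm hABne)
  set U := P.getVert 1 with hUdef
  set W := P.reverse.getVert 1 with hWdef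
  have hadjAU : T.G.Adj A U := Walk.adj_snd (p := P) hPnil
  have hadjBW : T.G.Adj B W := Walk.adj_snd (p := P.reverse) hPrnil
  have hUA : U ≠ A := hadjAU.ne'
  have hWB : W ≠ B := hadjBW.ne'
  have hUB : U ≠ B := fun h => hnotadj (h ▸ hadjAU)
  have hWA : W ≠ A := fun h => hnotadj ((h ▸ hadjBW).symm)
  have hUW : U ≠ W := by
    intro h
    exact hnotcherry ⟨U, hadjAU, by rw [h]; exact hadjBW⟩
  have hUmem : U ∈ P.support := snd_mem_support' P hPnil
  have hWmem : W ∈ P.support := by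
    have := snd_mem_support' P.reverse hPrnil
    rwa [support_reverse, List.mem_reverse] at this
  have degW : (T.G.neighborSet W).ncard = 3 := by
    apply T.internal_degree
    intro x hx hxW
    exact interior_ncard_ne_one hPpath hWmem hWA hWB (hxW ▸ T.leaf_degree x hx)
  have degU : (T.G.neighborSet U).ncard = 3 := by
    apply T.internal_degree
    intro x hx hxU
    exact interior_ncard_ne_one hPpath hUmem hUA hUB (hxU ▸ T.leaf_degree x hx)
  have third : ∀ (v n1 n2 : T.V), (T.G.neighborSet v).ncard = 3 →
      ∃ m ∈ T.G.neighborSet v, m ≠ n1 ∧ m ≠ n2 := by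
    intro v n1 n2 hv
    by_contra hno
    push_neg at hno
    have hsub : T.G.neighborSet v ⊆ {n1, n2} := by
      intro m hm
      by_cases h1 : m = n1
      · exact Or.inl h1
      · exact Or.inr (hno m hm h1)
    have hle := Set.ncard_le_ncard hsub (Set.toFinite _)
    have h2 : ({n1, n2} : Set T.V).ncard ≤ 2 := by
      apply le_trans (Set.ncard_insert_le _ _)
      simp
    omega
  -- D side
  have hWAnnil : ¬ (pth hc W A).Nil := not_nil_of_ne hWA
  set R := (pth hc W A).getVert 1 with hRdef
  have hadjWR : T.G.Adj W R := Walk.adj_snd (p := (pth hc W A)) hWAnnil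
  have hRB : R ≠ B := by
    intro h
    have hBmem : B ∈ (pth hc W A).support := h ▸ snd_mem_support' _ hWAnnil
    exact interior_ncard_ne_one (pth_isPath hc W A) hBmem (Ne.symm hWB) (Ne.symm hABne) degB
  obtain ⟨nW, hnWmem, hnWB, hnWR⟩ := third W B R degW
  have hadjWnW : T.G.Adj W nW := hnWmem
  obtain ⟨z, hz1, hzn⟩ := exists_leaf_dir hc hg hadjWnW
  have hnWW : nW ≠ W := hadjWnW.ne'
  have hzW : z ≠ W := by
    rintro rfl
    rw [pth_nil hc hg] at hzn
    simp only [Walk.support_nil, List.mem_singleton] at hzn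
    exact hnWW hzn
  have hnWnotWA : nW ∉ (pth hc W A).support := by
    intro hm
    have h1 := snd_eq hg (pth_isPath hc W A) hm hadjWnW
    rw [← hRdef] at h1
    exact hnWR h1.symm
  have hzB : z ≠ B := by
    rintro rfl
    have hWBedge : pth hc W B = Walk.cons hadjBW.symm Walk.nil :=
      (eq_pth hc hg _ (by simp [Walk.cons_isPath_iff, hadjBW.ne'])).symm
    rw [hWBedge] at hzn
    simp only [Walk.support_cons, Walk.support_nil, List.mem_cons, List.mem_singleton,
      List.not_mem_nil, or_false] at hzn
    rcases hzn with h | h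
    · exact hnWW h
    · exact hnWB h
  have hzA : z ≠ A := by
    rintro rfl
    exact hnWnotWA hzn
  have hWin : W ∈ (pth hc A z).support := by
    by_contra hno
    rcases pth_mem_union hc hg W A z hzn with hcase | hcase
    · exact hnWnotWA hcase
    · have hnWnotAW : nW ∉ (pth hc A W).support := by
        intro hmem
        apply hnWnotWA
        have hrev : (pth hc A W).reverse = pth hc W A :=
          eq_pth hc hg _ (pth_isPath hc A W).reverse
        rw [← hrev, support_reverse, List.mem_reverse]
        exact hmem
      have hq : ((pth hc A W).concat hadjWnW).IsPath :=
        concat_isPath' (pth_isPath hc A W) hadjWnW hnWnotAW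
      have heq : (pth hc A W).concat hadjWnW = pth hc A nW := eq_pth hc hg _ hq
      have hWin' : W ∈ (pth hc A nW).support := by
        rw [← heq, support_concat, List.mem_append]
        exact Or.inl (Walk.end_mem_support _)
      have htake : pth hc A nW = (pth hc A z).takeUntil nW hcase :=
        (eq_pth hc hg _ ((pth_isPath hc A z).takeUntil hcase)).symm
      exact hno ((pth hc A z).support_takeUntil_subset hcase (htake ▸ hWin'))
  obtain ⟨xd, hxdX, hxdz⟩ := T.degree_one_is_leaf z hz1
  have hxda : xd ≠ a := by rintro rfl; exact hzA hxdz.symm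
  have hxdb : xd ≠ b := by rintro rfl; exact hzB hxdz.symm
  -- C side
  have hUWnnil : ¬ (pth hc U W).Nil := not_nil_of_ne hUW
  set S := (pth hc U W).getVert 1 with hSdef
  have hadjUS : T.G.Adj U S := Walk.adj_snd (p := (pth hc U W)) hUWnnil
  have hSA : S ≠ A := by
    intro h
    have hAm : A ∈ (pth hc U W).support := h ▸ snd_mem_support' _ hUWnnil
    exact interior_ncard_ne_one (pth_isPath hc U W) hAm (Ne.symm hUA) (Ne.symm hWA) degA
  obtain ⟨nU, hnUmem, hnUA, hnUS⟩ := third U A S degU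
  have hadjUnU : T.G.Adj U nU := hnUmem
  obtain ⟨z', hz'1, hz'n⟩ := exists_leaf_dir hc hg hadjUnU
  have hnUU : nU ≠ U := hadjUnU.ne'
  have hz'U : z' ≠ U := by
    rintro rfl
    rw [pth_nil hc hg] at hz'n
    simp only [Walk.support_nil, List.mem_singleton] at hz'n
    exact hnUU hz'n
  have hz'A : z' ≠ A := by
    rintro rfl
    have hUAedge : pth hc U A = Walk.cons hadjAU.symm Walk.nil :=
      (eq_pth hc hg _ (by simp [Walk.cons_isPath_iff, hadjAU.ne'])).symm
    rw [hUAedge] at hz'n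
    simp only [Walk.support_cons, Walk.support_nil, List.mem_cons, List.mem_singleton,
      List.not_mem_nil, or_false] at hz'n
    rcases hz'n with h | h
    · exact hnUU h
    · exact hnUA h
  have hAnotQ : A ∉ (pth hc U z').support := by
    intro hAm
    exact interior_ncard_ne_one (pth_isPath hc U z') hAm (Ne.symm hUA) (Ne.symm hz'A) degA
  have hWnotQ : W ∉ (pth hc U z').support := by
    intro hWQ
    have htake : pth hc U W = (pth hc U z').takeUntil W hWQ :=
      (eq_pth hc hg _ ((pth_isPath hc U z').takeUntil hWQ)).symm
    have hSQ : S ∈ (pth hc U z').support := by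
      apply (pth hc U z').support_takeUntil_subset hWQ
      rw [← htake]
      exact snd_mem_support' _ hUWnnil
    have h1 := snd_eq hg (pth_isPath hc U z') hSQ hadjUS
    have h2 := snd_eq hg (pth_isPath hc U z') hz'n hadjUnU
    exact hnUS (by rw [← h2, h1])
  have hconsPath : (Walk.cons hadjAU (pth hc U z')).IsPath :=
    (pth_isPath hc U z').cons hAnotQ
  have heqAz' : Walk.cons hadjAU (pth hc U z') = pth hc A z' := eq_pth hc hg _ hconsPath
  have hWnotinAz' : W ∉ (pth hc A z').support := by
    rw [← heqAz', support_cons]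
    intro hmem
    rcases List.mem_cons.mp hmem with h | h
    · exact hWA h
    · exact hWnotQ h
  have hz'B : z' ≠ B := by
    rintro rfl
    exact hWnotinAz' hWmem
  obtain ⟨xc, hxcX, hxcz⟩ := T.degree_one_is_leaf z' hz'1
  have hxca : xc ≠ a := by rintro rfl; exact hz'A hxcz.symm
  have hxcb : xc ≠ b := by rintro rfl; exact hz'B hxcz.symm
  refine ⟨(X \ {a, b}).filter (fun y => W ∉ (pth hc A (T.leaf y)).support),
          (X \ {a, b}).filter (fun y => W ∈ (pth hc A (T.leaf y)).support),
          ?_, ?_, ?_, ?_, ?_⟩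
  · refine ⟨xc, Finset.mem_filter.mpr ⟨Finset.mem_sdiff.mpr ⟨hxcX, by simp [hxca, hxcb]⟩, ?_⟩⟩
    rw [hxcz]
    exact hWnotinAz'
  · refine ⟨xd, Finset.mem_filter.mpr ⟨Finset.mem_sdiff.mpr ⟨hxdX, by simp [hxda, hxdb]⟩, ?_⟩⟩
    rw [hxdz]
    exact hWin
  · rw [Finset.disjoint_left]
    intro y hyC hyD
    exact (Finset.mem_filter.mp hyC).2 (Finset.mem_filter.mp hyD).2
  · ext y
    simp only [Finset.mem_union, Finset.mem_filter]
    tauto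
  · intro c hcC d hdD hres
    obtain ⟨p, q, hp, hq, hdisj⟩ := hres
    have hpP : p = P := eq_pth hc hg p hp
    have hcW : W ∉ (pth hc A (T.leaf c)).support := (Finset.mem_filter.mp hcC).2
    have hdW : W ∈ (pth hc A (T.leaf d)).support := (Finset.mem_filter.mp hdD).2
    have hWcd : W ∈ (pth hc (T.leaf c) (T.leaf d)).support := by
      rcases pth_mem_union hc hg A (T.leaf c) (T.leaf d) hdW with h | h
      · exact absurd h hcW
      · exact h
    have hWp : W ∈ p.support := by rw [hpP]; exact hWmem
    exact hdisj W hWp (pth_subset hc hg q hWcd)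

end
end

section
/- Let X be a finite set, let a, b ∈ X be distinct, and set X' = X − {b}. Let S be a collection of subsets of X, and let S' be the collection of subsets of X' obtained from S by replacing, in each Y ∈ S, every occurrence of b by a (that is, Y is replaced by (Y − {b}) ∪ {a} if b ∈ Y, and by Y otherwise). If |X'| ≥ 4 and S satisfies the four-way partition property for X, then S' satisfies the four-way partition property for X'. -/
lemma relabel_disjoint_aux {α : Type} [DecidableEq α] (a b : α) (A1 A2 : Finset α)
    (d : Disjoint A1 A2) (hb1 : b ∉ A1) (hb2 : b ∉ A2) :
    Disjoint (if a ∈ A1 then insert b A1 else A1) (if a ∈ A2 then insert b A2 else A2) := by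
  split_ifs with h1 h2 h2
  · exact absurd h2 (Finset.disjoint_left.mp d h1)
  · simp [Finset.disjoint_insert_left, hb2, d]
  · simp [Finset.disjoint_insert_right, hb1, d]
  · exact d

lemma relabel_mem_aux {α : Type} [DecidableEq α] {a b x : α} {A : Finset α}
    (hx : x ∈ (if a ∈ A then insert b A else A)) (hbA : b ∉ A) :
    (if x = b then a else x) ∈ A := by
  split_ifs with hxb
  · subst hxb
    split_ifs at hx with haA
    · exact haA
    · exact absurd hx hbA
  · split_ifs at hx with haA
    · rcases Finset.mem_insert.mp hx with h | h
      · exact absurd h hxb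
      · exact h
    · exact hx

/-- relabeling `b` as `a` preserves the four-way partition property
(passing from `X` to `X' = X − {b}` and from `S` to the relabeled collection `S'`). -/
theorem fourWayPartitionProperty_relabel {α : Type} [DecidableEq α]
    (X : Finset α) (a b : α) (ha : a ∈ X) (hb : b ∈ X) (hab : a ≠ b)
    (S : Set (Finset α)) (hS : ∀ Y ∈ S, Y ⊆ X)
    (hX' : 4 ≤ (X.erase b).card)
    (hfour : FourWayPartitionProperty X S) :
    FourWayPartitionProperty (X.erase b)
      ((fun Y : Finset α => if b ∈ Y then insert a (Y.erase b) else Y) '' S) := by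
  intro A1 A2 A3 A4 h1 h2 h3 h4 d12 d13 d14 d23 d24 d34 hunion
  have haX' : a ∈ X.erase b := Finset.mem_erase.mpr ⟨hab, ha⟩
  have hmem : a ∈ A1 ∪ A2 ∪ A3 ∪ A4 := hunion ▸ haX'
  have hsubX : A1 ∪ A2 ∪ A3 ∪ A4 ⊆ X.erase b := hunion.le
  have hb1 : b ∉ A1 := fun h => (Finset.mem_erase.mp (hsubX (by simp [h]))).1 rfl
  have hb2 : b ∉ A2 := fun h => (Finset.mem_erase.mp (hsubX (by simp [h]))).1 rfl
  have hb3 : b ∉ A3 := fun h => (Finset.mem_erase.mp (hsubX (by simp [h]))).1 rfl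
  have hb4 : b ∉ A4 := fun h => (Finset.mem_erase.mp (hsubX (by simp [h]))).1 rfl
  set B1 := if a ∈ A1 then insert b A1 else A1 with hB1
  set B2 := if a ∈ A2 then insert b A2 else A2 with hB2
  set B3 := if a ∈ A3 then insert b A3 else A3 with hB3
  set B4 := if a ∈ A4 then insert b A4 else A4 with hB4
  have hU : B1 ∪ B2 ∪ B3 ∪ B4 = X := by
    have hm := hmem
    simp only [Finset.mem_union] at hm
    rcases hm with ((hA | hA) | hA) | hA
    · rw [hB1, hB2, hB3, hB4, if_pos hA,
        if_neg (fun h => Finset.disjoint_left.mp d12 hA h),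
        if_neg (fun h => Finset.disjoint_left.mp d13 hA h),
        if_neg (fun h => Finset.disjoint_left.mp d14 hA h)]
      simp only [Finset.insert_union, Finset.union_insert]
      rw [hunion, Finset.insert_erase hb]
    · rw [hB1, hB2, hB3, hB4, if_pos hA,
        if_neg (fun h => Finset.disjoint_left.mp d12 h hA),
        if_neg (fun h => Finset.disjoint_left.mp d23 hA h),
        if_neg (fun h => Finset.disjoint_left.mp d24 hA h)]
      simp only [Finset.insert_union, Finset.union_insert]
      rw [hunion, Finset.insert_erase hb]
    · rw [hB1, hB2, hB3, hB4, if_pos hA,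
        if_neg (fun h => Finset.disjoint_left.mp d13 h hA),
        if_neg (fun h => Finset.disjoint_left.mp d23 h hA),
        if_neg (fun h => Finset.disjoint_left.mp d34 hA h)]
      simp only [Finset.insert_union, Finset.union_insert]
      rw [hunion, Finset.insert_erase hb]
    · rw [hB1, hB2, hB3, hB4, if_pos hA,
        if_neg (fun h => Finset.disjoint_left.mp d14 h hA),
        if_neg (fun h => Finset.disjoint_left.mp d24 h hA),
        if_neg (fun h => Finset.disjoint_left.mp d34 h hA)]
      simp only [Finset.insert_union, Finset.union_insert]
      rw [hunion, Finset.insert_erase hb]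
  obtain ⟨x1, hx1, x2, hx2, x3, hx3, x4, hx4, hq⟩ :=
    hfour B1 B2 B3 B4
      (h1.mono (by rw [hB1]; split_ifs <;> simp))
      (h2.mono (by rw [hB2]; split_ifs <;> simp))
      (h3.mono (by rw [hB3]; split_ifs <;> simp))
      (h4.mono (by rw [hB4]; split_ifs <;> simp))
      (relabel_disjoint_aux a b A1 A2 d12 hb1 hb2)
      (relabel_disjoint_aux a b A1 A3 d13 hb1 hb3)
      (relabel_disjoint_aux a b A1 A4 d14 hb1 hb4)
      (relabel_disjoint_aux a b A2 A3 d23 hb2 hb3)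
      (relabel_disjoint_aux a b A2 A4 d24 hb2 hb4)
      (relabel_disjoint_aux a b A3 A4 d34 hb3 hb4)
      hU
  obtain ⟨hcard, Y, hYS, hsub⟩ := hq
  set g : α → α := fun x => if x = b then a else x with hg
  have hy1 : g x1 ∈ A1 := relabel_mem_aux hx1 hb1
  have hy2 : g x2 ∈ A2 := relabel_mem_aux hx2 hb2
  have hy3 : g x3 ∈ A3 := relabel_mem_aux hx3 hb3
  have hy4 : g x4 ∈ A4 := relabel_mem_aux hx4 hb4
  refine ⟨g x1, hy1, g x2, hy2, g x3, hy3, g x4, hy4, ?_, ?_⟩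
  · -- card = 4
    have n12 : g x1 ≠ g x2 := fun h => Finset.disjoint_left.mp d12 hy1 (h ▸ hy2)
    have n13 : g x1 ≠ g x3 := fun h => Finset.disjoint_left.mp d13 hy1 (h ▸ hy3)
    have n14 : g x1 ≠ g x4 := fun h => Finset.disjoint_left.mp d14 hy1 (h ▸ hy4)
    have n23 : g x2 ≠ g x3 := fun h => Finset.disjoint_left.mp d23 hy2 (h ▸ hy3)
    have n24 : g x2 ≠ g x4 := fun h => Finset.disjoint_left.mp d24 hy2 (h ▸ hy4)
    have n34 : g x3 ≠ g x4 := fun h => Finset.disjoint_left.mp d34 hy3 (h ▸ hy4)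
    rw [Finset.card_insert_of_notMem (by simp [n12, n13, n14]),
        Finset.card_insert_of_notMem (by simp [n23, n24]),
        Finset.card_insert_of_notMem (by simp [n34]),
        Finset.card_singleton]
  · refine ⟨(fun Y : Finset α => if b ∈ Y then insert a (Y.erase b) else Y) Y,
      Set.mem_image_of_mem _ hYS, ?_⟩
    have key : ∀ x ∈ Y, g x ∈ (if b ∈ Y then insert a (Y.erase b) else Y) := by
      intro x hx
      rw [hg]
      by_cases hxb : x = b
      · subst hxb
        simp [hx]
      · simp only [if_neg hxb]
        split_ifs with hbY
        · exact Finset.mem_insert_of_mem (Finset.mem_erase.mpr ⟨hxb, hx⟩)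
        · exact hx
    intro x hx
    simp only [Finset.mem_insert, Finset.mem_singleton] at hx
    rcases hx with rfl | rfl | rfl | rfl
    · exact key x1 (hsub (by simp))
    · exact key x2 (hsub (by simp))
    · exact key x3 (hsub (by simp))
    · exact key x4 (hsub (by simp))
end
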